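/- arXiv:1305.3534 — 9 statements merged into one kernel-verified Lean document; each statement's English description precedes it below -/
import Mathlib

section
/- Let μ be a critical probability distribution on {0,2,3,...} with finite variance σ². Define the series A = Σ_{i≥0} i·μ̄_{2i+1}, B = Σ_{i≥0} i·μ̄_{2i}, C = Σ_{i≥0} i·μ̄_{2i+2}, and set c_geo = ((A+B)·μ_{2Z} + (A+C)·μ_{2N}) / (μ_{2Z} + μ_{2N}). Then c_geo = (1/4)·(σ² + μ₀·μ_{2Z}/(2·μ_{2Z} − μ₀)). -/
open Finset in
lemma keyEnn (F : ℕ → ENNReal) (w : ℕ → ENNReal) (a : ℕ → ℕ) (ha : ∀ i, i ≤ a i) :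
    ∑' i, w i * ∑' j, F (a i + j)
      = ∑' n, ((∑ i ∈ Finset.range (n+1), if a i ≤ n then w i else 0) * F n) := by
  have h1 : ∀ i : ℕ, ∑' j, F (a i + j) = ∑' n, if a i ≤ n then F n else 0 := by
    intro i
    have hinj : Function.Injective (fun j : ℕ => a i + j) := fun x y h => by simpa using h
    have := hinj.tsum_eq (f := fun n => if a i ≤ n then F n else 0) ?_
    · rw [← this]
      refine tsum_congr fun j => ?_
      simp [Nat.le_add_right]
    · intro n hn
      simp only [Function.mem_support, ne_eq, ite_eq_right_iff, not_forall] at hn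
      obtain ⟨hc, -⟩ := hn
      exact ⟨n - a i, by simp; omega⟩
  calc ∑' i, w i * ∑' j, F (a i + j)
      = ∑' i, ∑' n, (if a i ≤ n then w i * F n else 0) := by
        refine tsum_congr fun i => ?_
        rw [h1, ← ENNReal.tsum_mul_left]
        exact tsum_congr fun n => by simp [mul_ite]
    _ = ∑' n, ∑' i, (if a i ≤ n then w i * F n else 0) := ENNReal.tsum_comm
    _ = ∑' n, ∑ i ∈ Finset.range (n+1), (if a i ≤ n then w i * F n else 0) := by
        refine tsum_congr fun n => tsum_eq_sum fun i hi => ?_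
        rw [if_neg]
        intro h
        exact hi (Finset.mem_range.2 (by have := ha i; omega))
    _ = ∑' n, ((∑ i ∈ Finset.range (n+1), if a i ≤ n then w i else 0) * F n) := by
        refine tsum_congr fun n => ?_
        rw [Finset.sum_mul]
        exact Finset.sum_congr rfl fun i _ => by simp [ite_mul]

lemma sum_ite_range (n k : ℕ) (c : ℕ → Prop) [DecidablePred c]
    (h : ∀ i, (i < n + 1 ∧ c i) ↔ i < k) :
    (∑ i ∈ Finset.range (n+1), if c i then i else 0) = ∑ i ∈ Finset.range k, i := by
  rw [← Finset.sum_filter]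
  refine Finset.sum_congr ?_ fun _ _ => rfl
  ext i
  simp only [Finset.mem_filter, Finset.mem_range]
  exact h i

lemma natId1 (n : ℕ) :
    4 * ((∑ i ∈ Finset.range ((n+1)/2), i) + ∑ i ∈ Finset.range (n/2+1), i) + n
      = n*n + 2*(n/2) := by
  obtain ⟨m, rfl|rfl⟩ : ∃ m, n = 2*m ∨ n = 2*m+1 := ⟨n/2, by omega⟩
  · rw [show (2*m+1)/2 = m by omega, show (2*m)/2 = m by omega]
    have g1 := Finset.sum_range_id_mul_two m
    have g2 := Finset.sum_range_id_mul_two (m+1)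
    cases m with
    | zero => simp
    | succ k =>
      simp only [Nat.succ_sub_one] at g1 g2
      nlinarith [g1, g2]
  · rw [show (2*m+1+1)/2 = m+1 by omega, show (2*m+1)/2 = m by omega]
    have g2 := Finset.sum_range_id_mul_two (m+1)
    simp only [Nat.succ_sub_one] at g2
    nlinarith [g2]

lemma natId2 (n : ℕ) :
    4 * ((∑ i ∈ Finset.range ((n+1)/2), i) + ∑ i ∈ Finset.range (n/2), i) + n + 2*(n/2)
      = n*n := by
  obtain ⟨m, rfl|rfl⟩ : ∃ m, n = 2*m ∨ n = 2*m+1 := ⟨n/2, by omega⟩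
  · rw [show (2*m+1)/2 = m by omega, show (2*m)/2 = m by omega]
    have g1 := Finset.sum_range_id_mul_two m
    cases m with
    | zero => simp
    | succ k =>
      simp only [Nat.succ_sub_one] at g1
      nlinarith [g1]
  · rw [show (2*m+1+1)/2 = m+1 by omega, show (2*m+1)/2 = m by omega]
    have g1 := Finset.sum_range_id_mul_two m
    have g2 := Finset.sum_range_id_mul_two (m+1)
    simp only [Nat.succ_sub_one] at g2
    cases m with
    | zero => simp
    | succ k =>
      simp only [Nat.succ_sub_one] at g1
      nlinarith [g1, g2]

/-- conversion helper: a nonneg real series equals toReal of a matching ENNReal series. -/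
lemma tsum_eq_toReal_of_ofReal_eq {f : ℕ → ℝ} (hf : ∀ n, 0 ≤ f n) {g : ℕ → ENNReal}
    (hg : ∀ n, ENNReal.ofReal (f n) = g n) (hfin : ∑' n, g n ≠ ⊤) :
    Summable f ∧ ∑' n, f n = (∑' n, g n).toReal := by
  have h1 : ∀ n, (g n).toReal = f n := fun n => by
    rw [← hg n, ENNReal.toReal_ofReal (hf n)]
  refine ⟨(ENNReal.summable_toReal hfin).congr h1, ?_⟩
  rw [ENNReal.tsum_toReal_eq (fun n => ENNReal.ne_top_of_tsum_ne_top hfin n)]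
  exact (tsum_congr h1).symm

/-- Lemma 7 of the paper: the constant `c_geo(μ)` defined through the series
`A = Σ_{i≥0} i·μ̄_{2i+1}`, `B = Σ_{i≥0} i·μ̄_{2i}`, `C = Σ_{i≥0} i·μ̄_{2i+2}` equals
`(1/4)·(σ² + μ₀·μ_{2Z}/(2·μ_{2Z} − μ₀))`. -/
theorem stmt_0 (μ : ℕ → ℝ) (hnn : ∀ i, 0 ≤ μ i) (h1 : μ 1 = 0)
    (hsum : ∑' i : ℕ, μ i = 1) (hmean : ∑' i : ℕ, (i : ℝ) * μ i = 1)
    (hvar : Summable (fun i : ℕ => (i : ℝ) ^ 2 * μ i)) :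
    let σ2 : ℝ := (∑' i : ℕ, (i : ℝ) ^ 2 * μ i) - 1
    let mubar : ℕ → ℝ := fun k => ∑' i : ℕ, μ (k + i)
    let m2Z : ℝ := ∑' i : ℕ, μ (2 * i)
    let m2N : ℝ := ∑' i : ℕ, μ (2 * (i + 1))
    let A : ℝ := ∑' i : ℕ, (i : ℝ) * mubar (2 * i + 1)
    let B : ℝ := ∑' i : ℕ, (i : ℝ) * mubar (2 * i)
    let C : ℝ := ∑' i : ℕ, (i : ℝ) * mubar (2 * i + 2)
    ((A + B) * m2Z + (A + C) * m2N) / (m2Z + m2N)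
      = (1 / 4) * (σ2 + μ 0 * m2Z / (2 * m2Z - μ 0)) := by
  intro σ2 mubar m2Z m2N A B C
  -- basic summability
  have hμs : Summable μ := by
    by_contra h; rw [tsum_eq_zero_of_not_summable h] at hsum; norm_num at hsum
  have hμ1 : Summable (fun n : ℕ => (n : ℝ) * μ n) := by
    by_contra h; rw [tsum_eq_zero_of_not_summable h] at hmean; norm_num at hmean
  set ν : ℕ → ENNReal := fun n => ENNReal.ofReal (μ n) with hνdef
  set V : ℝ := ∑' n : ℕ, (n : ℝ) ^ 2 * μ n with hVdef
  have hσ2 : σ2 = V - 1 := rfl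
  have hVnn : 0 ≤ V := by
    rw [hVdef]; exact tsum_nonneg fun n => mul_nonneg (sq_nonneg _) (hnn n)
  -- ENNReal moments
  have hν_sum : ∑' n, ν n = 1 := by
    rw [← ENNReal.ofReal_tsum_of_nonneg hnn hμs, hsum, ENNReal.ofReal_one]
  have hν_mean : ∑' n : ℕ, (n : ENNReal) * ν n = 1 := by
    have h : ∀ n : ℕ, ENNReal.ofReal ((n : ℝ) * μ n) = (n : ENNReal) * ν n := fun n => by
      rw [ENNReal.ofReal_mul (show (0:ℝ) ≤ (n:ℝ) from Nat.cast_nonneg n),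
        ENNReal.ofReal_natCast]
    rw [← tsum_congr h, ← ENNReal.ofReal_tsum_of_nonneg
      (f := fun n : ℕ => (n : ℝ) * μ n) (fun n => mul_nonneg (Nat.cast_nonneg n) (hnn n)) hμ1, hmean,
      ENNReal.ofReal_one]
  have hν_sq : ∑' n : ℕ, (n : ENNReal) * (n : ENNReal) * ν n = ENNReal.ofReal V := by
    have h : ∀ n : ℕ, ENNReal.ofReal ((n : ℝ) ^ 2 * μ n) = (n : ENNReal) * (n : ENNReal) * ν n :=
      fun n => by
        rw [ENNReal.ofReal_mul (show (0:ℝ) ≤ (n:ℝ)^2 from sq_nonneg _), sq,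
          ENNReal.ofReal_mul (show (0:ℝ) ≤ (n:ℝ) from Nat.cast_nonneg n),
          ENNReal.ofReal_natCast]
    rw [← tsum_congr h, ← ENNReal.ofReal_tsum_of_nonneg
      (f := fun n : ℕ => (n : ℝ) ^ 2 * μ n) (fun n => mul_nonneg (sq_nonneg _) (hnn n)) hvar]
  have hfin_sq : ∑' n : ℕ, (n : ENNReal) * (n : ENNReal) * ν n ≠ ⊤ := by
    rw [hν_sq]; exact ENNReal.ofReal_ne_top
  -- tails
  have htail : ∀ k : ℕ, ENNReal.ofReal (mubar k) = ∑' j, ν (k + j) := fun k =>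
    ENNReal.ofReal_tsum_of_nonneg (fun j => hnn _) (hμs.comp_injective (add_right_injective k))
  -- even/odd decomposition
  set m2Ze : ENNReal := ∑' i, ν (2 * i) with hm2Ze
  set modd : ENNReal := ∑' i, ν (2 * i + 1) with hmodd
  have hsplit : m2Ze + modd = 1 := by
    rw [hm2Ze, hmodd, tsum_even_add_odd ENNReal.summable ENNReal.summable, hν_sum]
  have hm2Ze_fin : m2Ze ≠ ⊤ := by
    intro h; rw [h] at hsplit; simp at hsplit
  have hmodd_fin : modd ≠ ⊤ := by
    intro h; rw [h, add_top] at hsplit; simp at hsplit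
  -- half-coefficient series
  set Shalf : ENNReal := ∑' n : ℕ, ((n / 2 : ℕ) : ENNReal) * ν n with hShalf
  have hmod2 : ∑' n : ℕ, ((n % 2 : ℕ) : ENNReal) * ν n = modd := by
    rw [← tsum_even_add_odd (f := fun n : ℕ => ((n % 2 : ℕ) : ENNReal) * ν n)
      ENNReal.summable ENNReal.summable]
    have he : ∀ k : ℕ, (((2 * k) % 2 : ℕ) : ENNReal) * ν (2 * k) = 0 := fun k => by
      rw [show (2 * k) % 2 = 0 by omega]; simp
    have ho : ∀ k : ℕ, (((2 * k + 1) % 2 : ℕ) : ENNReal) * ν (2 * k + 1) = ν (2 * k + 1) :=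
      fun k => by rw [show (2 * k + 1) % 2 = 1 by omega]; simp
    rw [tsum_congr he, tsum_congr ho]; simp [hmodd]
  have hhalf : 2 * Shalf = m2Ze := by
    have hsum2 : 2 * Shalf + modd = ∑' n : ℕ, (n : ENNReal) * ν n := by
      rw [hShalf, ← ENNReal.tsum_mul_left, ← hmod2, ← ENNReal.tsum_add]
      refine tsum_congr fun n => ?_
      rw [← mul_assoc, ← add_mul]
      congr 1
      rw [show ((2 : ENNReal)) = ((2 : ℕ) : ENNReal) by simp, ← Nat.cast_mul, ← Nat.cast_add]
      exact congrArg _ (by omega)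
    rw [hν_mean] at hsum2
    rw [← hsplit] at hsum2
    exact (ENNReal.add_left_inj hmodd_fin).mp hsum2
  -- apply the key lemma
  have hw : ∀ n : ℕ, ∀ c : ℕ → Prop, ∀ _ : DecidablePred c,
      (∑ i ∈ Finset.range (n+1), if c i then (i : ENNReal) else 0)
        = ((∑ i ∈ Finset.range (n+1), if c i then i else 0 : ℕ) : ENNReal) := by
    intro n c _
    rw [Nat.cast_sum]
    exact Finset.sum_congr rfl fun i _ => by split <;> simp
  set cA : ℕ → ℕ := fun n => ∑ i ∈ Finset.range ((n+1)/2), i with hcA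
  set cB : ℕ → ℕ := fun n => ∑ i ∈ Finset.range (n/2+1), i with hcB
  set cC : ℕ → ℕ := fun n => ∑ i ∈ Finset.range (n/2), i with hcC
  set SA : ENNReal := ∑' n : ℕ, ((cA n : ENNReal)) * ν n with hSA
  set SB : ENNReal := ∑' n : ℕ, ((cB n : ENNReal)) * ν n with hSB
  set SC : ENNReal := ∑' n : ℕ, ((cC n : ENNReal)) * ν n with hSC
  have hA_enn : ∑' i : ℕ, (i : ENNReal) * ∑' j, ν (2 * i + 1 + j) = SA := by
    rw [keyEnn ν (fun i => (i : ENNReal)) (fun i => 2 * i + 1) (fun i => by show i ≤ 2*i+1; omega), hSA]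
    refine tsum_congr fun n => ?_
    congr 1
    rw [hw n _ _, sum_ite_range n ((n+1)/2) _ (fun i => by omega)]
  have hB_enn : ∑' i : ℕ, (i : ENNReal) * ∑' j, ν (2 * i + j) = SB := by
    rw [keyEnn ν (fun i => (i : ENNReal)) (fun i => 2 * i) (fun i => by show i ≤ 2*i; omega), hSB]
    refine tsum_congr fun n => ?_
    congr 1
    rw [hw n _ _, sum_ite_range n (n/2+1) _ (fun i => by omega)]
  have hC_enn : ∑' i : ℕ, (i : ENNReal) * ∑' j, ν (2 * i + 2 + j) = SC := by
    rw [keyEnn ν (fun i => (i : ENNReal)) (fun i => 2 * i + 2) (fun i => by show i ≤ 2*i+2; omega), hSC]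
    refine tsum_congr fun n => ?_
    congr 1
    rw [hw n _ _, sum_ite_range n (n/2) _ (fun i => by omega)]
  -- finiteness of SA, SB, SC
  have hbound : ∀ (c : ℕ → ℕ), (∀ n, c n ≤ (n+1)*n) →
      (∑' n : ℕ, ((c n : ENNReal)) * ν n) ≠ ⊤ := by
    intro c hc
    have hle : (∑' n : ℕ, ((c n : ENNReal)) * ν n)
        ≤ ∑' n : ℕ, ((n : ENNReal) * (n : ENNReal) + (n : ENNReal)) * ν n := by
      refine ENNReal.tsum_le_tsum fun n => ?_
      gcongr
      calc ((c n : ENNReal)) ≤ (((n+1)*n : ℕ) : ENNReal) := by exact_mod_cast hc n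
        _ = (n : ENNReal) * (n : ENNReal) + (n : ENNReal) := by push_cast; ring
    refine ne_top_of_le_ne_top ?_ hle
    have : ∑' n : ℕ, ((n : ENNReal) * (n : ENNReal) + (n : ENNReal)) * ν n
        = (∑' n : ℕ, (n : ENNReal) * (n : ENNReal) * ν n) + ∑' n : ℕ, (n : ENNReal) * ν n := by
      rw [← ENNReal.tsum_add]; exact tsum_congr fun n => by ring
    rw [this, hν_sq, hν_mean]
    exact ENNReal.add_ne_top.2 ⟨ENNReal.ofReal_ne_top, ENNReal.one_ne_top⟩
  have hcard : ∀ k n : ℕ, k ≤ n + 1 → (∑ i ∈ Finset.range k, i) ≤ (n+1)*n := by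
    intro k n hk
    calc (∑ i ∈ Finset.range k, i) ≤ ∑ _i ∈ Finset.range k, n :=
          Finset.sum_le_sum fun i hi => by have := Finset.mem_range.1 hi; omega
      _ = k * n := by rw [Finset.sum_const, smul_eq_mul, Finset.card_range]
      _ ≤ (n+1)*n := Nat.mul_le_mul_right n hk
  have hSA_fin : SA ≠ ⊤ := hbound cA fun n => hcard _ n (by omega)
  have hSB_fin : SB ≠ ⊤ := hbound cB fun n => hcard _ n (by omega)
  have hSC_fin : SC ≠ ⊤ := hbound cC fun n => hcard _ n (by omega)
  -- the two ENNReal identities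
  have E1 : 4 * SA + 4 * SB + 1 = ENNReal.ofReal V + m2Ze := by
    have lhs : ∑' n : ℕ, ((4 * (cA n + cB n) + n : ℕ) : ENNReal) * ν n
        = 4 * SA + 4 * SB + 1 := by
      have h : ∀ n : ℕ, ((4 * (cA n + cB n) + n : ℕ) : ENNReal) * ν n
          = 4 * ((cA n : ENNReal) * ν n) + 4 * ((cB n : ENNReal) * ν n)
            + (n : ENNReal) * ν n := by
        intro n; push_cast; ring
      rw [tsum_congr h, ENNReal.tsum_add, ENNReal.tsum_add, ENNReal.tsum_mul_left,
        ENNReal.tsum_mul_left, hν_mean, hSA, hSB]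
    have rhs : ∑' n : ℕ, ((n * n + 2 * (n / 2) : ℕ) : ENNReal) * ν n
        = ENNReal.ofReal V + m2Ze := by
      have h : ∀ n : ℕ, ((n * n + 2 * (n / 2) : ℕ) : ENNReal) * ν n
          = (n : ENNReal) * (n : ENNReal) * ν n + 2 * (((n / 2 : ℕ) : ENNReal) * ν n) := by
        intro n; push_cast; ring
      rw [tsum_congr h, ENNReal.tsum_add, ENNReal.tsum_mul_left, hν_sq, ← hShalf, hhalf]
    rw [← lhs, ← rhs]
    exact tsum_congr fun n => by rw [natId1 n]
  have E2 : 4 * SA + 4 * SC + 1 + m2Ze = ENNReal.ofReal V := by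
    have lhs : ∑' n : ℕ, ((4 * (cA n + cC n) + n + 2 * (n / 2) : ℕ) : ENNReal) * ν n
        = 4 * SA + 4 * SC + 1 + m2Ze := by
      have h : ∀ n : ℕ, ((4 * (cA n + cC n) + n + 2 * (n / 2) : ℕ) : ENNReal) * ν n
          = 4 * ((cA n : ENNReal) * ν n) + 4 * ((cC n : ENNReal) * ν n)
            + (n : ENNReal) * ν n + 2 * (((n / 2 : ℕ) : ENNReal) * ν n) := by
        intro n; push_cast; ring
      rw [tsum_congr h, ENNReal.tsum_add, ENNReal.tsum_add, ENNReal.tsum_add,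
        ENNReal.tsum_mul_left, ENNReal.tsum_mul_left, ENNReal.tsum_mul_left,
        hν_mean, hSA, hSC, ← hShalf, hhalf]
    rw [← lhs, ← hν_sq]
    refine tsum_congr fun n => ?_
    rw [natId2 n]
    push_cast
    ring
  -- real versions of A, B, C
  have hA : A = SA.toReal := by
    have h := tsum_eq_toReal_of_ofReal_eq
      (f := fun i : ℕ => (i : ℝ) * mubar (2 * i + 1))
      (fun i => mul_nonneg (by positivity) (tsum_nonneg fun j => hnn _))
      (g := fun i : ℕ => (i : ENNReal) * ∑' j, ν (2 * i + 1 + j))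
      (fun i => by rw [ENNReal.ofReal_mul (by positivity), ENNReal.ofReal_natCast, htail])
      (by rw [hA_enn]; exact hSA_fin)
    rw [show SA.toReal = (∑' i : ℕ, (i : ENNReal) * ∑' j, ν (2 * i + 1 + j)).toReal from by
      rw [hA_enn]]
    exact h.2
  have hB : B = SB.toReal := by
    have h := tsum_eq_toReal_of_ofReal_eq
      (f := fun i : ℕ => (i : ℝ) * mubar (2 * i))
      (fun i => mul_nonneg (by positivity) (tsum_nonneg fun j => hnn _))
      (g := fun i : ℕ => (i : ENNReal) * ∑' j, ν (2 * i + j))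
      (fun i => by rw [ENNReal.ofReal_mul (by positivity), ENNReal.ofReal_natCast, htail])
      (by rw [hB_enn]; exact hSB_fin)
    rw [show SB.toReal = (∑' i : ℕ, (i : ENNReal) * ∑' j, ν (2 * i + j)).toReal from by
      rw [hB_enn]]
    exact h.2
  have hC : C = SC.toReal := by
    have h := tsum_eq_toReal_of_ofReal_eq
      (f := fun i : ℕ => (i : ℝ) * mubar (2 * i + 2))
      (fun i => mul_nonneg (by positivity) (tsum_nonneg fun j => hnn _))
      (g := fun i : ℕ => (i : ENNReal) * ∑' j, ν (2 * i + 2 + j))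
      (fun i => by rw [ENNReal.ofReal_mul (by positivity), ENNReal.ofReal_natCast, htail])
      (by rw [hC_enn]; exact hSC_fin)
    rw [show SC.toReal = (∑' i : ℕ, (i : ENNReal) * ∑' j, ν (2 * i + 2 + j)).toReal from by
      rw [hC_enn]]
    exact h.2
  -- real versions of m2Z, m2N
  have hm2Zpair := tsum_eq_toReal_of_ofReal_eq
    (f := fun i : ℕ => μ (2 * i)) (fun i => hnn _)
    (g := fun i : ℕ => ν (2 * i)) (fun i => rfl) (by rw [← hm2Ze]; exact hm2Ze_fin)
  have hm2Z : m2Z = m2Ze.toReal := hm2Zpair.2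
  set m2Ne : ENNReal := ∑' i, ν (2 * (i + 1)) with hm2NeDef
  have hzero_add : m2Ze = ν 0 + m2Ne := by
    have := tsum_eq_zero_add' (f := fun i : ℕ => ν (2 * i)) ENNReal.summable
    simpa [hm2Ze, hm2NeDef] using this
  have hm2Ne_fin : m2Ne ≠ ⊤ := by
    intro h; rw [h, add_top] at hzero_add; exact hm2Ze_fin hzero_add
  have hm2Npair := tsum_eq_toReal_of_ofReal_eq
    (f := fun i : ℕ => μ (2 * (i + 1))) (fun i => hnn _)
    (g := fun i : ℕ => ν (2 * (i + 1))) (fun i => rfl) (by rw [← hm2NeDef]; exact hm2Ne_fin)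
  have hm2N : m2N = m2Ne.toReal := hm2Npair.2
  have hμ0rel : μ 0 + m2N = m2Z := by
    rw [hm2N, hm2Z, hzero_add, ENNReal.toReal_add (by simp [hνdef]) hm2Ne_fin]
    congr 1
    exact (ENNReal.toReal_ofReal (hnn 0)).symm
  -- real versions of E1, E2
  have rE1 : 4 * A + 4 * B + 1 = V + m2Z := by
    have := congrArg ENNReal.toReal E1
    rw [ENNReal.toReal_add (by
          exact ENNReal.add_ne_top.2 ⟨ENNReal.mul_ne_top (by simp) hSA_fin,
            ENNReal.mul_ne_top (by simp) hSB_fin⟩) ENNReal.one_ne_top,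
      ENNReal.toReal_add (ENNReal.mul_ne_top (by simp) hSA_fin)
        (ENNReal.mul_ne_top (by simp) hSB_fin),
      ENNReal.toReal_add ENNReal.ofReal_ne_top hm2Ze_fin,
      ENNReal.toReal_mul, ENNReal.toReal_mul, ENNReal.toReal_ofReal hVnn] at this
    simpa [hA, hB, hm2Z] using this
  have rE2 : 4 * A + 4 * C + 1 + m2Z = V := by
    have := congrArg ENNReal.toReal E2
    rw [ENNReal.toReal_add (by
          exact ENNReal.add_ne_top.2 ⟨ENNReal.add_ne_top.2
            ⟨ENNReal.mul_ne_top (by simp) hSA_fin, ENNReal.mul_ne_top (by simp) hSC_fin⟩,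
            ENNReal.one_ne_top⟩) hm2Ze_fin,
      ENNReal.toReal_add (by
          exact ENNReal.add_ne_top.2 ⟨ENNReal.mul_ne_top (by simp) hSA_fin,
            ENNReal.mul_ne_top (by simp) hSC_fin⟩) ENNReal.one_ne_top,
      ENNReal.toReal_add (ENNReal.mul_ne_top (by simp) hSA_fin)
        (ENNReal.mul_ne_top (by simp) hSC_fin),
      ENNReal.toReal_mul, ENNReal.toReal_mul, ENNReal.toReal_ofReal hVnn] at this
    simpa [hA, hC, hm2Z] using this
  -- positivity of m2Z
  have hs2 : Summable (fun i : ℕ => μ (2 * i)) := hm2Zpair.1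
  have hm2Zpos : 0 < m2Z := by
    rcases lt_or_eq_of_le (tsum_nonneg (fun i : ℕ => hnn (2 * i)) : (0:ℝ) ≤ m2Z) with h | h
    · exact h
    exfalso
    have hzero : ∀ i, μ (2 * i) = 0 := by
      intro i
      refine le_antisymm ?_ (hnn _)
      have := Summable.le_tsum hs2 i fun j _ => hnn _
      rw [← h] at this
      exact this
    have h3 : ∀ n : ℕ, 3 * μ n ≤ (n : ℝ) * μ n := by
      intro n
      rcases Nat.even_or_odd n with ⟨r, hr⟩ | ⟨r, hr⟩
      · have : μ n = 0 := by rw [show n = 2 * r by omega]; exact hzero r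
        rw [this]; simp
      · rcases Nat.eq_zero_or_pos r with hr0 | hr1
        · have : n = 1 := by omega
          rw [this, h1]; simp
        · refine mul_le_mul_of_nonneg_right ?_ (hnn n)
          have : (3 : ℕ) ≤ n := by omega
          exact_mod_cast this
    have hle := Summable.tsum_le_tsum h3 (hμs.mul_left 3) hμ1
    rw [tsum_mul_left, hsum, hmean] at hle
    linarith
  have hm2Nnn : 0 ≤ m2N := by rw [hm2N]; exact ENNReal.toReal_nonneg
  -- final algebra
  have hDpos : 0 < m2Z + m2N := by linarith
  have hgoal : 4 * ((A + B) * m2Z + (A + C) * m2N) = σ2 * (m2Z + m2N) + μ 0 * m2Z := by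
    rw [hσ2]
    linear_combination m2Z * rE1 + m2N * rE2 - m2Z * hμ0rel
  rw [show (2 * m2Z - μ 0 : ℝ) = m2Z + m2N by linarith]
  rw [div_eq_iff (ne_of_gt hDpos)]
  field_simp
  linear_combination hgoal
end

section
/- Let μ be a critical probability distribution on {0,2,3,...} with finite variance σ². Then Σ_{i≥0} i·μ̄_{2i+1} + Σ_{i≥0} i·μ̄_{2i} = (σ² + μ_{2Z})/4. -/
open Finset

private lemma gauss2 : ∀ m : ℕ,
    (∑ i ∈ range m, i) + (∑ i ∈ range (m+1), i) = m * m := by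
  intro m
  induction m with
  | zero => simp
  | succ k ih =>
    rw [Finset.sum_range_succ, Finset.sum_range_succ (n := k+1)]
    have e : (k+1)*(k+1) = k*k + 2*k + 1 := by ring
    rw [Finset.sum_range_succ] at *
    linarith [ih, e]

private lemma key_nat (j : ℕ) :
    4 * ((∑ i ∈ range ((j+2-1)/2), i) + (∑ i ∈ range ((j+2-0)/2), i)) + j % 2 = j ^ 2 := by
  rcases Nat.even_or_odd' j with ⟨m, rfl | rfl⟩
  · have h1 : (2*m+2-1)/2 = m := by omega
    have h2 : (2*m+2-0)/2 = m+1 := by omega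
    rw [h1, h2, gauss2]
    have e : (2*m) ^ 2 = 4*(m*m) := by ring
    omega
  · have h1 : (2*m+1+2-1)/2 = m+1 := by omega
    have h2 : (2*m+1+2-0)/2 = m+1 := by omega
    rw [h1, h2]
    have h := gauss2 m
    rw [Finset.sum_range_succ] at *
    have e : (2*m+1) ^ 2 = 4*(m*m) + 4*m + 1 := by ring
    omega

/-- First identity in the proof of Lemma 7:
`Σ_{i≥0} i·μ̄_{2i+1} + Σ_{i≥0} i·μ̄_{2i} = (σ² + μ_{2Z})/4`. -/
theorem stmt_1 (μ : ℕ → ℝ) (hnn : ∀ i, 0 ≤ μ i) (h1 : μ 1 = 0)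
    (hsum : ∑' i : ℕ, μ i = 1) (hmean : ∑' i : ℕ, (i : ℝ) * μ i = 1)
    (hvar : Summable (fun i : ℕ => (i : ℝ) ^ 2 * μ i)) :
    let σ2 : ℝ := (∑' i : ℕ, (i : ℝ) ^ 2 * μ i) - 1
    let mubar : ℕ → ℝ := fun k => ∑' i : ℕ, μ (k + i)
    let m2Z : ℝ := ∑' i : ℕ, μ (2 * i)
    (∑' i : ℕ, (i : ℝ) * mubar (2 * i + 1)) + (∑' i : ℕ, (i : ℝ) * mubar (2 * i))
      = (σ2 + m2Z) / 4 := by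
  intro σ2 mubar m2Z
  have hμs : Summable μ := by
    by_contra h
    rw [tsum_eq_zero_of_not_summable h] at hsum
    norm_num at hsum
  set ν : ℕ → ENNReal := fun j => ENNReal.ofReal (μ j) with hνdef
  -- nonnegativity of tails
  have hnb : ∀ m, 0 ≤ mubar m := fun m => tsum_nonneg fun i => hnn _
  -- tails in ENNReal
  have htail : ∀ m : ℕ, ENNReal.ofReal (mubar m) = ∑' j : ℕ, if m ≤ j then ν j else 0 := by
    intro m
    have hsm : Summable (fun i => μ (m + i)) :=
      ((summable_nat_add_iff m).mpr hμs).congr fun i => by rw [add_comm]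
    have : mubar m = ∑' i : ℕ, μ (m + i) := rfl
    rw [this, ENNReal.ofReal_tsum_of_nonneg (fun i => hnn _) hsm]
    have hinj : Function.Injective (fun k : ℕ => m + k) := fun a b h => by
      simpa using h
    rw [← hinj.tsum_eq (f := fun j => if m ≤ j then ν j else 0)
      (by
        intro j hj
        simp only [Function.mem_support, ne_eq, ite_eq_right_iff, not_forall] at hj
        obtain ⟨hmj, -⟩ := hj
        exact ⟨j - m, show m + (j - m) = j by omega⟩)]
    exact tsum_congr fun k => by simp [ν]
  -- main reindexing, in ENNReal
  have helper : ∀ t : ℕ, t ≤ 1 →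
      (∑' i : ℕ, (i : ENNReal) * ENNReal.ofReal (mubar (2*i+t)))
        = ∑' j : ℕ, ((∑ i ∈ range ((j+2-t)/2), i : ℕ) : ENNReal) * ν j := by
    intro t ht
    have step1 : ∀ i : ℕ, (i : ENNReal) * ENNReal.ofReal (mubar (2*i+t))
        = ∑' j : ℕ, (if 2*i+t ≤ j then (i : ENNReal) * ν j else 0) := by
      intro i
      rw [htail, ← ENNReal.tsum_mul_left]
      exact tsum_congr fun j => by rw [mul_ite, mul_zero]
    calc (∑' i : ℕ, (i : ENNReal) * ENNReal.ofReal (mubar (2*i+t)))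
        = ∑' (i : ℕ) (j : ℕ), (if 2*i+t ≤ j then (i : ENNReal) * ν j else 0) :=
          tsum_congr step1
      _ = ∑' (j : ℕ) (i : ℕ), (if 2*i+t ≤ j then (i : ENNReal) * ν j else 0) :=
          ENNReal.tsum_comm
      _ = ∑' j : ℕ, ((∑ i ∈ range ((j+2-t)/2), i : ℕ) : ENNReal) * ν j := by
          refine tsum_congr fun j => ?_
          have heq : (∑' i : ℕ, (if 2*i+t ≤ j then (i : ENNReal) * ν j else 0))
              = ∑ i ∈ range ((j+2-t)/2), (if 2*i+t ≤ j then (i : ENNReal) * ν j else 0) := by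
            refine tsum_eq_sum fun i hi => ?_
            rw [Finset.mem_range] at hi
            rw [if_neg (by omega)]
          rw [heq, Nat.cast_sum, Finset.sum_mul]
          refine Finset.sum_congr rfl fun i hi => ?_
          rw [Finset.mem_range] at hi
          rw [if_pos (by omega)]
  set T1 : ENNReal := ∑' i : ℕ, (i : ENNReal) * ENNReal.ofReal (mubar (2*i+1)) with hT1def
  set T0 : ENNReal := ∑' i : ℕ, (i : ENNReal) * ENNReal.ofReal (mubar (2*i)) with hT0def
  have hT0' : T0 = ∑' i : ℕ, (i : ENNReal) * ENNReal.ofReal (mubar (2*i+0)) := rfl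
  -- the master identity
  have hmaster : 4 * (T1 + T0) + (∑' j : ℕ, ((j % 2 : ℕ) : ENNReal) * ν j)
      = ∑' j : ℕ, ((j : ENNReal)) ^ 2 * ν j := by
    rw [hT1def, hT0', helper 1 (by norm_num), helper 0 (by norm_num), ← ENNReal.tsum_add,
      ← ENNReal.tsum_mul_left, ← ENNReal.tsum_add]
    refine tsum_congr fun j => ?_
    have hk := key_nat j
    calc 4 * (((∑ i ∈ range ((j+2-1)/2), i : ℕ) : ENNReal) * ν j
            + ((∑ i ∈ range ((j+2-0)/2), i : ℕ) : ENNReal) * ν j)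
          + ((j % 2 : ℕ) : ENNReal) * ν j
        = ((4 * ((∑ i ∈ range ((j+2-1)/2), i) + (∑ i ∈ range ((j+2-0)/2), i)) + j % 2 : ℕ)
            : ENNReal) * ν j := by push_cast; ring
      _ = ((j ^ 2 : ℕ) : ENNReal) * ν j := by rw [hk]
      _ = ((j : ENNReal)) ^ 2 * ν j := by push_cast; ring
  -- identify Q with σ² + 1
  have hσ2 : σ2 + 1 = ∑' i : ℕ, (i : ℝ) ^ 2 * μ i := by
    simp only [σ2]; ring
  have hQ : (∑' j : ℕ, ((j : ENNReal)) ^ 2 * ν j) = ENNReal.ofReal (σ2 + 1) := by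
    rw [hσ2, ENNReal.ofReal_tsum_of_nonneg (fun i => mul_nonneg (by positivity) (hnn i)) hvar]
    refine (tsum_congr fun j => ?_).symm
    rw [ENNReal.ofReal_mul (by positivity)]
    congr 1
    rw [← ENNReal.ofReal_natCast j, ← ENNReal.ofReal_pow (by positivity)]
  -- identify O with 1 - m2Z
  have hinj2 : Function.Injective (fun k : ℕ => 2 * k) := fun a b h => by simpa using h
  have hinj21 : Function.Injective (fun k : ℕ => 2 * k + 1) := fun a b h => by simpa using h
  have heo : m2Z + (∑' k : ℕ, μ (2 * k + 1)) = 1 := by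
    have := tsum_even_add_odd (f := μ) (hμs.comp_injective hinj2)
      (hμs.comp_injective hinj21)
    rw [hsum] at this
    exact this
  have hm2Znn : 0 ≤ m2Z := tsum_nonneg fun i => hnn _
  have hoddnn : (0:ℝ) ≤ ∑' k : ℕ, μ (2 * k + 1) := tsum_nonneg fun i => hnn _
  have hO : (∑' j : ℕ, ((j % 2 : ℕ) : ENNReal) * ν j) = ENNReal.ofReal (1 - m2Z) := by
    have hsplit := tsum_even_add_odd (f := fun j : ℕ => ((j % 2 : ℕ) : ENNReal) * ν j)
      ENNReal.summable ENNReal.summable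
    rw [← hsplit]
    have hz : (∑' k : ℕ, (((2 * k) % 2 : ℕ) : ENNReal) * ν (2 * k)) = 0 := by
      refine Summable.tsum_eq_zero_iff ENNReal.summable |>.mpr fun k => ?_
      simp [Nat.mul_mod_right]
    have ho : (∑' k : ℕ, (((2 * k + 1) % 2 : ℕ) : ENNReal) * ν (2 * k + 1))
        = ENNReal.ofReal (1 - m2Z) := by
      have hodds : Summable (fun k : ℕ => μ (2 * k + 1)) := hμs.comp_injective hinj21
      have : (1 : ℝ) - m2Z = ∑' k : ℕ, μ (2 * k + 1) := by linarith
      rw [this, ENNReal.ofReal_tsum_of_nonneg (fun i => hnn _) hodds]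
      refine tsum_congr fun k => ?_
      have : (2 * k + 1) % 2 = 1 := by omega
      simp [this, ν]
    rw [hz, ho, zero_add]
  -- finiteness
  have hQfin : (∑' j : ℕ, ((j : ENNReal)) ^ 2 * ν j) ≠ ⊤ := by
    rw [hQ]; exact ENNReal.ofReal_ne_top
  have h4fin : 4 * (T1 + T0) ≠ ⊤ := by
    intro h
    rw [← hmaster, h, top_add] at hQfin
    exact hQfin rfl
  have hTfin : T1 + T0 ≠ ⊤ := by
    intro h
    rw [h, ENNReal.mul_top (by norm_num)] at h4fin
    exact h4fin rfl
  have hT1fin : T1 ≠ ⊤ := ne_top_of_le_ne_top hTfin le_self_add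
  have hT0fin : T0 ≠ ⊤ := ne_top_of_le_ne_top hTfin le_add_self
  -- convert T1, T0 to real sums
  have hconv : ∀ (g : ℕ → ℕ),
      (∑' i : ℕ, (i : ENNReal) * ENNReal.ofReal (mubar (g i))).toReal
        = ∑' i : ℕ, (i : ℝ) * mubar (g i) := by
    intro g
    have hterm : ∀ i : ℕ, (i : ENNReal) * ENNReal.ofReal (mubar (g i))
        = ENNReal.ofReal ((i : ℝ) * mubar (g i)) := by
      intro i
      rw [ENNReal.ofReal_mul (by positivity), ENNReal.ofReal_natCast]
    rw [tsum_congr hterm, ENNReal.tsum_toReal_eq (fun i => ENNReal.ofReal_ne_top)]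
    exact tsum_congr fun i => ENNReal.toReal_ofReal (mul_nonneg (by positivity) (hnb _))
  -- take toReal of master identity
  have hσ2nn : 0 ≤ σ2 + 1 := by
    rw [hσ2]
    exact tsum_nonneg fun i => mul_nonneg (by positivity) (hnn i)
  have hQtr : (∑' j : ℕ, ((j : ENNReal)) ^ 2 * ν j).toReal = σ2 + 1 := by
    rw [hQ, ENNReal.toReal_ofReal hσ2nn]
  have hOtr : (∑' j : ℕ, ((j % 2 : ℕ) : ENNReal) * ν j).toReal = 1 - m2Z := by
    rw [hO, ENNReal.toReal_ofReal (by linarith)]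
  have hmtr := congrArg ENNReal.toReal hmaster
  rw [ENNReal.toReal_add h4fin (by rw [hO]; exact ENNReal.ofReal_ne_top),
    ENNReal.toReal_mul, ENNReal.toReal_add hT1fin hT0fin, hOtr, hQtr] at hmtr
  have h4 : ((4 : ENNReal)).toReal = 4 := by norm_num
  rw [h4] at hmtr
  have e1 : T1.toReal = ∑' i : ℕ, (i : ℝ) * mubar (2 * i + 1) := hconv (fun i => 2 * i + 1)
  have e0 : T0.toReal = ∑' i : ℕ, (i : ℝ) * mubar (2 * i) := hconv (fun i => 2 * i)
  rw [e1, e0] at hmtr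
  linarith
end

section
/- Let μ be a critical probability distribution on {0,2,3,...} with finite variance σ². Then Σ_{i≥0} i·μ̄_{2i+1} + Σ_{i≥0} i·μ̄_{2i+2} = (σ² − μ_{2Z})/4. -/
open Finset Function

private lemma gaussR (m : ℕ) :
    ((∑ i ∈ Finset.range m, i : ℕ) : ℝ) = m * (m - 1) / 2 := by
  induction m with
  | zero => simp
  | succ s ih =>
    rw [Finset.sum_range_succ]
    push_cast at ih ⊢
    rw [ih]; ring

private lemma aux_sum (μ : ℕ → ℝ) (hnn : ∀ i, 0 ≤ μ i) (hμ : Summable μ)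
    (hq : Summable (fun n : ℕ => ((n : ℝ) ^ 2 + n) * μ n)) (k : ℕ) :
    (∑' i : ℕ, (i : ℝ) * ∑' j : ℕ, μ (2 * i + k + j)
      = ∑' n : ℕ, ((∑ i ∈ Finset.range ((n + 2 - k) / 2), i : ℕ) : ℝ) * μ n) ∧
    Summable (fun n : ℕ => ((∑ i ∈ Finset.range ((n + 2 - k) / 2), i : ℕ) : ℝ) * μ n) := by
  classical
  set c : ℕ → ℕ := fun n => ∑ i ∈ Finset.range ((n + 2 - k) / 2), i with hc
  set Hc : ℕ → ℕ → ℝ := fun n i => if 2 * i + k ≤ n then (i : ℝ) * μ n else 0 with hH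
  have hnnH : ∀ n i, 0 ≤ Hc n i := by
    intro n i; dsimp only [Hc]
    split
    · exact mul_nonneg (by positivity) (hnn n)
    · exact le_refl 0
  -- fiber sums
  have hfiber : ∀ n, (∑' i, Hc n i) = (c n : ℝ) * μ n := by
    intro n
    rw [tsum_eq_sum (s := Finset.range ((n + 2 - k) / 2))
      (by intro i hi; simp only [Finset.mem_range, not_lt] at hi
          dsimp only [Hc]; rw [if_neg (by omega)])]
    rw [Finset.sum_congr rfl (fun i hi => ?_), ← Finset.sum_mul, Nat.cast_sum]
    simp only [Finset.mem_range] at hi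
    dsimp only [Hc]; rw [if_pos (by omega)]
  -- bound on c
  have hcb : ∀ n, (c n : ℝ) ≤ (n : ℝ) ^ 2 + n := by
    intro n
    have h1 : c n ≤ n * n + n := by
      calc c n ≤ (Finset.range ((n + 2 - k) / 2)).card • n := by
            refine Finset.sum_le_card_nsmul _ _ n (fun i hi => ?_)
            simp only [Finset.mem_range] at hi; omega
        _ = ((n + 2 - k) / 2) * n := by simp [smul_eq_mul]
        _ ≤ (n + 1) * n := Nat.mul_le_mul_right n (by omega)
        _ = n * n + n := by ring
    calc (c n : ℝ) ≤ ((n * n + n : ℕ) : ℝ) := by exact_mod_cast h1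
      _ = (n : ℝ) ^ 2 + n := by push_cast; ring
  have hcS : Summable (fun n : ℕ => (c n : ℝ) * μ n) := by
    refine Summable.of_nonneg_of_le
      (fun n => mul_nonneg (by positivity) (hnn n))
      (fun n => mul_le_mul_of_nonneg_right (hcb n) (hnn n)) hq
  -- summability of fibers in i (finite support)
  have hfibS : ∀ n, Summable (fun i => Hc n i) := by
    intro n
    apply summable_of_finite_support
    apply Set.Finite.subset (Set.finite_Icc 0 n)
    intro i hi
    simp only [Function.mem_support, Hc] at hi
    by_contra hmem
    simp only [Set.mem_Icc, not_and_or, not_le] at hmem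
    exact hi (if_neg (by omega))
  -- summability of rows in n
  have hrowS : ∀ i : ℕ, Summable (fun n => Hc n i) := by
    intro i
    refine Summable.of_nonneg_of_le (fun n => hnnH n i) (fun n => ?_) (hμ.mul_left (i : ℝ))
    dsimp only [Hc]
    split
    · exact le_refl _
    · exact mul_nonneg (by positivity) (hnn n)
  -- summability of uncurried
  have hU : Summable (Function.uncurry Hc) := by
    have : Summable (fun p : ℕ × ℕ => Hc p.1 p.2) :=
      (summable_prod_of_nonneg (fun p => hnnH p.1 p.2)).mpr
        ⟨fun n => hfibS n, hcS.congr (fun n => (hfiber n).symm)⟩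
    exact this
  -- row identities
  have hrow : ∀ i : ℕ, (i : ℝ) * ∑' j, μ (2 * i + k + j) = ∑' n, Hc n i := by
    intro i
    have hinj : Function.Injective (fun j : ℕ => 2 * i + k + j) := fun a b h => by
      simpa using h
    have hsupp : Function.support (fun n => Hc n i)
        ⊆ Set.range (fun j : ℕ => 2 * i + k + j) := by
      intro n hn
      simp only [Function.mem_support, Hc] at hn
      have hle : 2 * i + k ≤ n := by
        by_contra h; exact hn (if_neg h)
      exact ⟨n - (2 * i + k), show 2 * i + k + (n - (2 * i + k)) = n by omega⟩
    calc (i : ℝ) * ∑' j, μ (2 * i + k + j) = ∑' j, (i : ℝ) * μ (2 * i + k + j) :=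
          tsum_mul_left.symm
      _ = ∑' j, Hc (2 * i + k + j) i := by
          refine tsum_congr (fun j => ?_)
          dsimp only [Hc]; rw [if_pos (by omega)]
      _ = ∑' n, Hc n i := hinj.tsum_eq hsupp
  have hmain : ∑' i : ℕ, (i : ℝ) * ∑' j : ℕ, μ (2 * i + k + j)
      = ∑' n : ℕ, (c n : ℝ) * μ n := by
    calc ∑' i : ℕ, (i : ℝ) * ∑' j : ℕ, μ (2 * i + k + j)
        = ∑' (i : ℕ) (n : ℕ), Hc n i := tsum_congr hrow
      _ = ∑' (n : ℕ) (i : ℕ), Hc n i := Summable.tsum_comm' hU hfibS hrowS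
      _ = ∑' n : ℕ, (c n : ℝ) * μ n := tsum_congr hfiber
  exact ⟨hmain, hcS⟩

/-- Second identity in the proof of Lemma 7:
`Σ_{i≥0} i·μ̄_{2i+1} + Σ_{i≥0} i·μ̄_{2i+2} = (σ² − μ_{2Z})/4`. -/
theorem stmt_2 (μ : ℕ → ℝ) (hnn : ∀ i, 0 ≤ μ i) (h1 : μ 1 = 0)
    (hsum : ∑' i : ℕ, μ i = 1) (hmean : ∑' i : ℕ, (i : ℝ) * μ i = 1)
    (hvar : Summable (fun i : ℕ => (i : ℝ) ^ 2 * μ i)) :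
    let σ2 : ℝ := (∑' i : ℕ, (i : ℝ) ^ 2 * μ i) - 1
    let mubar : ℕ → ℝ := fun k => ∑' i : ℕ, μ (k + i)
    let m2Z : ℝ := ∑' i : ℕ, μ (2 * i)
    (∑' i : ℕ, (i : ℝ) * mubar (2 * i + 1)) + (∑' i : ℕ, (i : ℝ) * mubar (2 * i + 2))
      = (σ2 - m2Z) / 4 := by
  classical
  intro σ2 mubar m2Z
  -- basic summabilities
  have hμ : Summable μ := by
    by_contra h
    rw [tsum_eq_zero_of_not_summable h] at hsum
    norm_num at hsum
  have hmom : Summable (fun n : ℕ => (n : ℝ) * μ n) := by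
    by_contra h
    rw [tsum_eq_zero_of_not_summable h] at hmean
    norm_num at hmean
  have hq : Summable (fun n : ℕ => ((n : ℝ) ^ 2 + n) * μ n) :=
    (hvar.add hmom).congr (fun n => by ring)
  obtain ⟨he1, hs1⟩ := aux_sum μ hnn hμ hq 1
  obtain ⟨he2, hs2⟩ := aux_sum μ hnn hμ hq 2
  have hL1 : (∑' i : ℕ, (i : ℝ) * mubar (2 * i + 1))
      = ∑' n : ℕ, ((∑ i ∈ Finset.range ((n + 2 - 1) / 2), i : ℕ) : ℝ) * μ n := he1
  have hL2 : (∑' i : ℕ, (i : ℝ) * mubar (2 * i + 2))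
      = ∑' n : ℕ, ((∑ i ∈ Finset.range ((n + 2 - 2) / 2), i : ℕ) : ℝ) * μ n := he2
  -- odd indicator sum
  have hevenS : Summable (fun n : ℕ => if Even n then μ n else 0) := by
    refine Summable.of_nonneg_of_le (fun n => ?_) (fun n => ?_) hμ
    · split; exacts [hnn n, le_refl 0]
    · split; exacts [le_refl _, hnn n]
  have hoddS : Summable (fun n : ℕ => if Odd n then μ n else 0) := by
    refine Summable.of_nonneg_of_le (fun n => ?_) (fun n => ?_) hμ
    · split; exacts [hnn n, le_refl 0]
    · split; exacts [le_refl _, hnn n]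
  have heven : (∑' n : ℕ, if Even n then μ n else 0) = m2Z := by
    symm
    have hinj : Function.Injective (fun i : ℕ => 2 * i) := fun a b h => by simpa using h
    have hsupp : Function.support (fun n : ℕ => if Even n then μ n else 0)
        ⊆ Set.range (fun i : ℕ => 2 * i) := by
      intro n hn
      simp only [Function.mem_support] at hn
      rcases Nat.even_or_odd n with h | h
      · obtain ⟨r, hr⟩ := h; exact ⟨r, show 2 * r = n by omega⟩
      · exact (hn (if_neg (Nat.not_even_iff_odd.mpr h))).elim
    calc m2Z = ∑' i : ℕ, (if Even (2 * i) then μ (2 * i) else 0) := by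
          refine tsum_congr (fun i => ?_)
          rw [if_pos ⟨i, by ring⟩]
      _ = ∑' n : ℕ, (if Even n then μ n else 0) := hinj.tsum_eq hsupp
  have hodd : (∑' n : ℕ, if Odd n then μ n else 0) = 1 - m2Z := by
    have hpt : ∀ n : ℕ, (if Odd n then μ n else 0) = μ n - (if Even n then μ n else 0) := by
      intro n
      rcases Nat.even_or_odd n with h | h
      · rw [if_neg (Nat.not_odd_iff_even.mpr h), if_pos h]; ring
      · rw [if_pos h, if_neg (Nat.not_even_iff_odd.mpr h)]; ring
    rw [tsum_congr hpt, Summable.tsum_sub hμ hevenS, hsum, heven]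
  -- pointwise combination
  have hpt : ∀ n : ℕ,
      ((∑ i ∈ Finset.range ((n + 2 - 1) / 2), i : ℕ) : ℝ) * μ n
        + ((∑ i ∈ Finset.range ((n + 2 - 2) / 2), i : ℕ) : ℝ) * μ n
      = (n : ℝ) ^ 2 * μ n / 4 - (n : ℝ) * μ n / 2 + (if Odd n then μ n else 0) / 4 := by
    intro n
    rcases Nat.even_or_odd n with ⟨m, hm⟩ | ⟨m, hm⟩
    · subst hm
      rw [if_neg (Nat.not_odd_iff_even.mpr ⟨m, rfl⟩)]
      have e1 : (m + m + 2 - 1) / 2 = m := by omega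
      have e2 : (m + m + 2 - 2) / 2 = m := by omega
      rw [e1, e2, gaussR]
      push_cast
      ring
    · subst hm
      rw [if_pos ⟨m, rfl⟩]
      have e1 : (2 * m + 1 + 2 - 1) / 2 = m + 1 := by omega
      have e2 : (2 * m + 1 + 2 - 2) / 2 = m := by omega
      rw [e1, e2, gaussR, gaussR]
      push_cast
      ring
  rw [hL1, hL2, ← Summable.tsum_add hs1 hs2, tsum_congr hpt]
  rw [Summable.tsum_add ((hvar.div_const 4).sub ((hmom.div_const 2))) (hoddS.div_const 4),
    Summable.tsum_sub (hvar.div_const 4) (hmom.div_const 2),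
    tsum_div_const, tsum_div_const, tsum_div_const, hmean, hodd]
  show (∑' i : ℕ, (i : ℝ) ^ 2 * μ i) / 4 - 1 / 2 + (1 - m2Z) / 4 = (σ2 - m2Z) / 4
  simp only [σ2]
  ring
end

section
/- Let μ be a critical probability distribution on {0,2,3,...} and let (G,D) be an ℕ²-valued random pair with P(G = a, D = b) = μ_{a+b+1} for all a,b ∈ ℕ. Then for every i ∈ ℕ: P(D = i and D ≤ G) = μ̄_{2i+1}; P(G + 1 = i and D > G + 1) = μ̄_{2i+1} if i ≥ 1 and 0 if i = 0; P(D = i and D = G + 1) = μ_{2i} if i ≥ 1 and 0 if i = 0; P(D = i and D < G) = μ̄_{2i+2}; and P(D = i and D = G) = μ_{2i+1}. -/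
open MeasureTheory

lemma union_toReal {Ω : Type*} [MeasurableSpace Ω] (ℙ : Measure Ω) [IsProbabilityMeasure ℙ]
    (f : ℕ → Set Ω) (hm : ∀ n, MeasurableSet (f n)) (hd : Pairwise (Function.onFun Disjoint f)) :
    (ℙ (⋃ n, f n)).toReal = ∑' n, (ℙ (f n)).toReal := by
  rw [measure_iUnion hd hm, ENNReal.tsum_toReal_eq (fun n => measure_ne_top ℙ _)]

/-- The transition probabilities of Section 3.2: if `(G,D)` has joint law
`P(G=a, D=b) = μ_{a+b+1}`, then the probabilities of the various comparison events
are given by tails of `μ`. -/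
theorem stmt_6 {Ω : Type*} [MeasurableSpace Ω] (ℙ : Measure Ω) [IsProbabilityMeasure ℙ]
    (μ : ℕ → ℝ) (hnn : ∀ i, 0 ≤ μ i) (h1 : μ 1 = 0)
    (hsum : ∑' i : ℕ, μ i = 1) (hmean : ∑' i : ℕ, (i : ℝ) * μ i = 1)
    (G D : Ω → ℕ) (hGmeas : Measurable G) (hDmeas : Measurable D)
    (hjoint : ∀ a b : ℕ, (ℙ {ω | G ω = a ∧ D ω = b}).toReal = μ (a + b + 1)) :
    let mubar : ℕ → ℝ := fun k => ∑' i : ℕ, μ (k + i)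
    ∀ i : ℕ,
      ((ℙ {ω | D ω = i ∧ D ω ≤ G ω}).toReal = mubar (2 * i + 1)) ∧
      ((ℙ {ω | G ω + 1 = i ∧ G ω + 1 < D ω}).toReal = if 1 ≤ i then mubar (2 * i + 1) else 0) ∧
      ((ℙ {ω | D ω = i ∧ D ω = G ω + 1}).toReal = if 1 ≤ i then μ (2 * i) else 0) ∧
      ((ℙ {ω | D ω = i ∧ D ω < G ω}).toReal = mubar (2 * i + 2)) ∧
      ((ℙ {ω | D ω = i ∧ D ω = G ω}).toReal = μ (2 * i + 1)) := by
  intro mubar i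
  have hmeas : ∀ a b : ℕ, MeasurableSet {ω | G ω = a ∧ D ω = b} := fun a b => by
    have : {ω | G ω = a ∧ D ω = b} = G ⁻¹' {a} ∩ D ⁻¹' {b} := rfl
    rw [this]
    exact (hGmeas (measurableSet_singleton a)).inter (hDmeas (measurableSet_singleton b))
  refine ⟨?_, ?_, ?_, ?_, ?_⟩
  · have hset : {ω | D ω = i ∧ D ω ≤ G ω} = ⋃ j : ℕ, {ω | G ω = i + j ∧ D ω = i} := by
      ext ω
      simp only [Set.mem_setOf_eq, Set.mem_iUnion]
      constructor
      · rintro ⟨h1, h2⟩; exact ⟨G ω - i, by omega, h1⟩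
      · rintro ⟨j, h1, h2⟩; exact ⟨h2, by omega⟩
    rw [hset, union_toReal ℙ _ (fun j => hmeas _ _)]
    · exact tsum_congr fun j => by rw [hjoint]; congr 1; omega
    · intro a b hab
      rw [Function.onFun, Set.disjoint_left]
      rintro ω ⟨h1, h2⟩ ⟨h3, h4⟩; omega
  · rcases Nat.eq_zero_or_pos i with hi | hi
    · subst hi
      have : {ω | G ω + 1 = 0 ∧ G ω + 1 < D ω} = ∅ := by
        ext ω; simp
      simp [this]
    · have hi' : 1 ≤ i := hi
      rw [if_pos hi']
      have hset : {ω | G ω + 1 = i ∧ G ω + 1 < D ω}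
          = ⋃ j : ℕ, {ω | G ω = i - 1 ∧ D ω = i + 1 + j} := by
        ext ω
        simp only [Set.mem_setOf_eq, Set.mem_iUnion]
        constructor
        · rintro ⟨h1, h2⟩; exact ⟨D ω - i - 1, by omega, by omega⟩
        · rintro ⟨h1, j, h2⟩; omega
      rw [hset, union_toReal ℙ _ (fun j => hmeas _ _)]
      · exact tsum_congr fun j => by rw [hjoint]; congr 1; omega
      · intro a b hab
        rw [Function.onFun, Set.disjoint_left]
        rintro ω ⟨h1, h2⟩ ⟨h3, h4⟩; omega
  · rcases Nat.eq_zero_or_pos i with hi | hi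
    · subst hi
      have : {ω | D ω = 0 ∧ D ω = G ω + 1} = ∅ := by
        ext ω; simp; omega
      simp [this]
    · have hi' : 1 ≤ i := hi
      rw [if_pos hi']
      have : {ω | D ω = i ∧ D ω = G ω + 1} = {ω | G ω = i - 1 ∧ D ω = i} := by
        ext ω; simp only [Set.mem_setOf_eq]; omega
      rw [this, hjoint]; congr 1; omega
  · have hset : {ω | D ω = i ∧ D ω < G ω} = ⋃ j : ℕ, {ω | G ω = i + 1 + j ∧ D ω = i} := by
      ext ω
      simp only [Set.mem_setOf_eq, Set.mem_iUnion]
      constructor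
      · rintro ⟨h1, h2⟩; exact ⟨G ω - i - 1, by omega, h1⟩
      · rintro ⟨j, h1, h2⟩; exact ⟨h2, by omega⟩
    rw [hset, union_toReal ℙ _ (fun j => hmeas _ _)]
    · exact tsum_congr fun j => by rw [hjoint]; congr 1; omega
    · intro a b hab
      rw [Function.onFun, Set.disjoint_left]
      rintro ω ⟨h1, h2⟩ ⟨h3, h4⟩; omega
  · have : {ω | D ω = i ∧ D ω = G ω} = {ω | G ω = i ∧ D ω = i} := by
      ext ω; simp only [Set.mem_setOf_eq]; omega
    rw [this, hjoint]; congr 1; omega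
end

section
/- Let μ be a critical probability distribution on {0,2,3,...} with μ_{2N} > 0. Define, for i ∈ ℕ, the two-step transition quantities p(i,D|D) = (μ_{odd}+μ₀)·(μ̄_{2i+1} + μ̄_{2i+1}·1_{i≥1}) + 2·μ_{2N}·μ̄_{2i+2}, p(i,U|D) = (μ_{odd}+μ₀)·μ_{2i}·1_{i≥1} + μ_{2N}·μ_{2i+1}, p(i,D|U) = μ_{2Z}·(μ̄_{2i+1} + μ̄_{2i+1}·1_{i≥1}) + 2·μ_{odd}·μ̄_{2i+2}, p(i,U|U) = μ_{2Z}·μ_{2i}·1_{i≥1} + μ_{odd}·μ_{2i+1}, and set ν(i,D) = μ̄_{2i+1} + μ̄_{2i+1}·1_{i≥1} + 2·μ̄_{2i+2} and ν(i,U) = μ_{2i}·1_{i≥1} + μ_{2i+1}. Then there exists a constant a > 0 (namely a = min(μ_{2N}, μ_{odd}) if μ_{odd} > 0, and a = μ_{2N}/3 if μ_{odd} = 0) such that for all i ∈ ℕ and all X, Y ∈ {D,U}: a·ν(i,X) ≤ p(i,X|Y) ≤ ν(i,X). -/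
set_option maxHeartbeats 1000000


/-- The minorization/majorization condition (5) in the proof of Proposition 8, for the
two-step transition probabilities of the chain `(Xₙ, Pₙ)`. The state `D` is encoded by
`true` and `U` by `false`; `p i X Y` is the two-step transition probability from the
driving state `Y` to `(i, X)`. -/
theorem stmt_7 (μ : ℕ → ℝ) (hnn : ∀ i, 0 ≤ μ i) (h1 : μ 1 = 0)
    (hsum : ∑' i : ℕ, μ i = 1) (hmean : ∑' i : ℕ, (i : ℝ) * μ i = 1)
    (hm2N : 0 < ∑' i : ℕ, μ (2 * (i + 1))) :
    let mubar : ℕ → ℝ := fun k => ∑' i : ℕ, μ (k + i)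
    let m2Z : ℝ := ∑' i : ℕ, μ (2 * i)
    let m2N : ℝ := ∑' i : ℕ, μ (2 * (i + 1))
    let modd : ℝ := ∑' i : ℕ, μ (2 * i + 1)
    let ind : ℕ → ℝ := fun i => if 1 ≤ i then 1 else 0
    let p : ℕ → Bool → Bool → ℝ := fun i X Y =>
      match X, Y with
      | true, true => (modd + μ 0) * (mubar (2 * i + 1) + mubar (2 * i + 1) * ind i)
          + 2 * m2N * mubar (2 * i + 2)
      | false, true => (modd + μ 0) * μ (2 * i) * ind i + m2N * μ (2 * i + 1)
      | true, false => m2Z * (mubar (2 * i + 1) + mubar (2 * i + 1) * ind i)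
          + 2 * modd * mubar (2 * i + 2)
      | false, false => m2Z * μ (2 * i) * ind i + modd * μ (2 * i + 1)
    let ν : ℕ → Bool → ℝ := fun i X =>
      match X with
      | true => mubar (2 * i + 1) + mubar (2 * i + 1) * ind i + 2 * mubar (2 * i + 2)
      | false => μ (2 * i) * ind i + μ (2 * i + 1)
    ∃ a : ℝ, 0 < a ∧ a = (if 0 < modd then min m2N modd else m2N / 3) ∧
      ∀ (i : ℕ) (X Y : Bool), a * ν i X ≤ p i X Y ∧ p i X Y ≤ ν i X := by
  intro mubar m2Z m2N modd ind p ν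
  -- basic summability
  have hS : Summable μ := by
    by_contra h
    rw [tsum_eq_zero_of_not_summable h] at hsum
    norm_num at hsum
  have hSg : Summable (fun i : ℕ => (i : ℝ) * μ i) := by
    by_contra h
    rw [tsum_eq_zero_of_not_summable h] at hmean
    norm_num at hmean
  have hinjE : Function.Injective (fun k : ℕ => 2 * k) := fun a b h => by
    dsimp only at h; omega
  have hinjO : Function.Injective (fun k : ℕ => 2 * k + 1) := fun a b h => by
    dsimp only at h; omega
  have hinjE1 : Function.Injective (fun k : ℕ => 2 * (k + 1)) := fun a b h => by
    dsimp only at h; omega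
  have hSe : Summable (fun k : ℕ => μ (2 * k)) := hS.comp_injective hinjE
  have hSo : Summable (fun k : ℕ => μ (2 * k + 1)) := hS.comp_injective hinjO
  have hSe1 : Summable (fun k : ℕ => μ (2 * (k + 1))) := hS.comp_injective hinjE1
  have hSbar : ∀ k : ℕ, Summable (fun i : ℕ => μ (k + i)) := fun k =>
    hS.comp_injective (fun a b h => by dsimp only at h; omega :
      Function.Injective (fun i : ℕ => k + i))
  -- parity decomposition
  have hEO : m2Z + modd = 1 := by
    rw [← hsum]
    exact tsum_even_add_odd (f := μ) hSe hSo
  have hZsplit : m2Z = μ 0 + m2N := by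
    have h := Summable.tsum_eq_zero_add hSe
    simpa using h
  have hmodd_nn : 0 ≤ modd := tsum_nonneg fun i => hnn _
  have hm2N' : 0 < m2N := hm2N
  have hμ0 : 0 ≤ μ 0 := hnn 0
  have hm2Z_nn : 0 ≤ m2Z := tsum_nonneg fun i => hnn _
  have hc1 : modd + μ 0 ≤ 1 := by linarith
  have hc2 : m2N ≤ 1 := by linarith
  have hc3 : m2Z ≤ 1 := by linarith
  have hc4 : modd ≤ 1 := by linarith
  -- mubar facts
  have hbar_nn : ∀ k, 0 ≤ mubar k := fun k => tsum_nonneg fun i => hnn _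
  have hbar_rec : ∀ k, mubar k = μ k + mubar (k + 1) := by
    intro k
    have h := Summable.tsum_eq_zero_add (hSbar k)
    have h2 : ∑' i : ℕ, μ (k + (i + 1)) = ∑' i : ℕ, μ (k + 1 + i) :=
      tsum_congr fun i => congrArg μ (by omega)
    simpa [h2] using h
  have hind : ∀ i, ind i = 0 ∨ ind i = 1 := by
    intro i
    by_cases h : 1 ≤ i <;> simp [ind, h]
  -- conclusion
  refine ⟨if 0 < modd then min m2N modd else m2N / 3, ?_, rfl, ?_⟩
  · split
    · exact lt_min hm2N' ‹0 < modd›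
    · linarith
  by_cases hmo : 0 < modd
  · -- case modd > 0
    rw [if_pos hmo]
    intro i X Y
    have hA := hbar_nn (2 * i + 1)
    have hB := hbar_nn (2 * i + 2)
    have hμe := hnn (2 * i)
    have hμo := hnn (2 * i + 1)
    have ha1 : min m2N modd ≤ m2N := min_le_left _ _
    have ha2 : min m2N modd ≤ modd := min_le_right _ _
    have ha0 : (0 : ℝ) ≤ min m2N modd := le_min hm2N'.le hmo.le
    have ha3 : min m2N modd ≤ modd + μ 0 := by linarith
    have ha4 : min m2N modd ≤ m2Z := by linarith
    cases X <;> cases Y <;> simp only [p, ν] <;> rcases hind i with h | h <;> rw [h] <;>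
      constructor <;>
      linarith [mul_le_mul_of_nonneg_right ha3 hA, mul_le_mul_of_nonneg_right ha4 hA,
        mul_le_mul_of_nonneg_right ha1 hB, mul_le_mul_of_nonneg_right ha2 hB,
        mul_le_mul_of_nonneg_right ha2 hμo, mul_le_mul_of_nonneg_right ha1 hμo,
        mul_le_mul_of_nonneg_right ha3 hμe, mul_le_mul_of_nonneg_right ha4 hμe,
        mul_le_mul_of_nonneg_right hc1 hA, mul_le_mul_of_nonneg_right hc3 hA,
        mul_le_mul_of_nonneg_right hc2 hB, mul_le_mul_of_nonneg_right hc4 hB,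
        mul_le_mul_of_nonneg_right hc1 hμe, mul_le_mul_of_nonneg_right hc3 hμe,
        mul_le_mul_of_nonneg_right hc2 hμo, mul_le_mul_of_nonneg_right hc4 hμo]
  · -- case modd = 0
    rw [if_neg hmo]
    have hmz : modd = 0 := le_antisymm (not_lt.mp hmo) hmodd_nn
    have hoddzero : ∀ k, μ (2 * k + 1) = 0 := by
      intro k
      have h : μ (2 * k + 1) ≤ modd := Summable.le_tsum hSo k (fun j _ => hnn _)
      have h2 := hnn (2 * k + 1)
      linarith
    -- mean restriction: 2 * m2N ≤ 1
    have hge : Summable (fun k : ℕ => ((2 * k : ℕ) : ℝ) * μ (2 * k)) :=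
      hSg.comp_injective hinjE
    have hgo : Summable (fun k : ℕ => ((2 * k + 1 : ℕ) : ℝ) * μ (2 * k + 1)) :=
      hSg.comp_injective hinjO
    have hgo0 : ∑' k : ℕ, ((2 * k + 1 : ℕ) : ℝ) * μ (2 * k + 1) = 0 := by
      convert tsum_zero with k
      rw [hoddzero k, mul_zero]
    have hSeven : ∑' k : ℕ, ((2 * k : ℕ) : ℝ) * μ (2 * k) = 1 := by
      have h := tsum_even_add_odd (f := fun i : ℕ => (i : ℝ) * μ i) hge hgo
      rw [hgo0, add_zero] at h
      rw [h, hmean]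
    have hge1 : Summable (fun k : ℕ => ((2 * (k + 1) : ℕ) : ℝ) * μ (2 * (k + 1))) :=
      hSg.comp_injective hinjE1
    have hSeven1 : ∑' k : ℕ, ((2 * (k + 1) : ℕ) : ℝ) * μ (2 * (k + 1)) = 1 := by
      have h := Summable.tsum_eq_zero_add hge
      rw [show ((2 * 0 : ℕ) : ℝ) * μ (2 * 0) = 0 by norm_num, zero_add] at h
      rw [← h, hSeven]
    have h2m2N : 2 * m2N ≤ 1 := by
      have hle : ∑' k : ℕ, 2 * μ (2 * (k + 1)) ≤
          ∑' k : ℕ, ((2 * (k + 1) : ℕ) : ℝ) * μ (2 * (k + 1)) := by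
        refine Summable.tsum_le_tsum (fun k => ?_) (hSe1.mul_left 2) hge1
        have h2 : (2 : ℝ) ≤ ((2 * (k + 1) : ℕ) : ℝ) := by
          push_cast
          nlinarith [Nat.cast_nonneg (α := ℝ) k]
        exact mul_le_mul_of_nonneg_right h2 (hnn _)
      rw [tsum_mul_left, hSeven1] at hle
      exact hle
    have hμ0big : m2N ≤ μ 0 := by linarith
    intro i X Y
    have hB := hbar_nn (2 * i + 2)
    have hμe := hnn (2 * i)
    have hbareq : mubar (2 * i + 1) = mubar (2 * i + 2) := by
      have h := hbar_rec (2 * i + 1)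
      rw [hoddzero i, zero_add] at h
      simpa using h
    cases X <;> cases Y <;> simp only [p, ν, hmz, hoddzero i, hbareq] <;>
      rcases hind i with h | h <;> rw [h] <;> constructor <;>
      linarith [mul_le_mul_of_nonneg_right hμ0big hB, mul_le_mul_of_nonneg_right hμ0big hμe,
        mul_nonneg hμ0 hB, mul_nonneg hm2N'.le hB, mul_nonneg hμ0 hμe,
        mul_nonneg hm2N'.le hμe, mul_le_mul_of_nonneg_right hc2 hB,
        mul_le_mul_of_nonneg_right hc3 hB, mul_le_mul_of_nonneg_right hc3 hμe,
        mul_le_mul_of_nonneg_right (show μ 0 ≤ 1 by linarith) hB,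
        mul_le_mul_of_nonneg_right (show μ 0 ≤ 1 by linarith) hμe,
        mul_le_mul_of_nonneg_right (show m2N ≤ m2Z by linarith) hB,
        mul_le_mul_of_nonneg_right (show m2N ≤ m2Z by linarith) hμe,
        mul_nonneg hm2Z_nn hB, mul_nonneg hm2Z_nn hμe]
end

section
/- Let T be a finite tree (a finite connected acyclic simple graph) with n ≥ 2 vertices in which every vertex has degree 1 or degree at least 3, and regard its vertex set V as a metric space with the graph distance. Let L ⊆ V be the set of leaves (vertices of degree 1), with the induced metric. Then the Gromov–Hausdorff distance between the metric spaces L and V satisfies d_GH(L, V) ≤ ln(n)/ln(2). -/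
open SimpleGraph Finset

/-- In a tree, a vertex `u` has at most one neighbor whose distance to `v` is
at most that of `u`. -/
lemma tree_unique_down {V : Type*} [DecidableEq V] {G : SimpleGraph V} (hconn : G.Connected)
    (hacyclic : G.IsAcyclic) (v u w1 w2 : V) (h1 : G.Adj u w1) (h2 : G.Adj u w2)
    (hd1 : G.dist v w1 ≤ G.dist v u) (hd2 : G.dist v w2 ≤ G.dist v u) : w1 = w2 := by
  obtain ⟨p1, hp1, hl1⟩ := hconn.exists_path_of_dist w1 v
  obtain ⟨p2, hp2, hl2⟩ := hconn.exists_path_of_dist w2 v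
  have hnmem : ∀ (w : V) (p : G.Walk w v), p.IsPath → p.length = G.dist w v →
      G.Adj u w → G.dist v w ≤ G.dist v u → u ∉ p.support := by
    intro w p hp hl hadj hd hu
    have ht1 : G.dist w u ≤ (p.takeUntil u hu).length := G.dist_le _
    have ht2 : G.dist u v ≤ (p.dropUntil u hu).length := G.dist_le _
    have ht3 : (p.takeUntil u hu).length + (p.dropUntil u hu).length = p.length := by
      rw [← SimpleGraph.Walk.length_append, SimpleGraph.Walk.take_spec]
    have hwu : G.dist w u = 1 := SimpleGraph.dist_eq_one_iff_adj.mpr hadj.symm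
    have hc1 : G.dist w v = G.dist v w := G.dist_comm ..
    have hc2 : G.dist u v = G.dist v u := G.dist_comm ..
    omega
  have hq1 : (SimpleGraph.Walk.cons h1 p1).IsPath :=
    hp1.cons (hnmem w1 p1 hp1 hl1 h1 hd1)
  have hq2 : (SimpleGraph.Walk.cons h2 p2).IsPath :=
    hp2.cons (hnmem w2 p2 hp2 hl2 h2 hd2)
  have heq : (⟨SimpleGraph.Walk.cons h1 p1, hq1⟩ : G.Path u v)
      = ⟨SimpleGraph.Walk.cons h2 p2, hq2⟩ := hacyclic.path_unique _ _
  have heq' : SimpleGraph.Walk.cons h1 p1 = SimpleGraph.Walk.cons h2 p2 :=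
    congrArg Subtype.val heq
  calc w1 = (SimpleGraph.Walk.cons h1 p1).getVert 1 := by
        rw [SimpleGraph.Walk.getVert_cons_succ, SimpleGraph.Walk.getVert_zero]
    _ = (SimpleGraph.Walk.cons h2 p2).getVert 1 := by rw [heq']
    _ = w2 := by rw [SimpleGraph.Walk.getVert_cons_succ, SimpleGraph.Walk.getVert_zero]

/-- Every vertex of a tree with all degrees `1` or `≥ 3` has a leaf at distance
at most `log₂ (card V)`. -/
lemma exists_close_leaf {V : Type*} [Fintype V] [DecidableEq V] (G : SimpleGraph V)
    [DecidableRel G.Adj] [Nonempty {v : V // G.degree v = 1}]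
    (hconn : G.Connected) (hacyclic : G.IsAcyclic)
    (hdeg : ∀ v : V, G.degree v = 1 ∨ 3 ≤ G.degree v) (v : V) :
    ∃ ℓ : V, G.degree ℓ = 1 ∧ 2 ^ (G.dist v ℓ) ≤ Fintype.card V := by
  classical
  obtain ⟨l0⟩ := (inferInstance : Nonempty {v : V // G.degree v = 1})
  have hsne : (Finset.univ.filter (fun w => G.degree w = 1)).Nonempty :=
    ⟨l0.1, by simp [l0.2]⟩
  obtain ⟨ℓ, hℓmem, hmin⟩ := Finset.exists_min_image _ (fun w => G.dist v w) hsne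
  simp only [Finset.mem_filter, Finset.mem_univ, true_and] at hℓmem
  refine ⟨ℓ, hℓmem, ?_⟩
  set k := G.dist v ℓ with hk
  have hmin' : ∀ w : V, G.degree w = 1 → k ≤ G.dist v w := by
    intro w hw
    exact hmin w (by simp [hw])
  set S : ℕ → Finset V := fun i => Finset.univ.filter (fun u => G.dist v u = i) with hS
  have hmain : ∀ i, i ≤ k → 2 ^ i ≤ (S i).card := by
    intro i
    induction i with
    | zero =>
      intro _
      have : v ∈ S 0 := by simp [hS]
      simpa using Finset.card_pos.mpr ⟨v, this⟩
    | succ i ih =>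
      intro hik
      have IH := ih (by omega)
      set T : V → Finset V := fun u =>
        (G.neighborFinset u).filter (fun w => G.dist v w = i + 1) with hT
      have key1 : ∀ u ∈ S i, 2 ≤ (T u).card := by
        intro u hu
        simp only [hS, Finset.mem_filter, Finset.mem_univ, true_and] at hu
        have hdegu : 3 ≤ G.degree u := by
          rcases hdeg u with h | h
          · have := hmin' u h
            omega
          · exact h
        have hsplit : (T u).card +
            ((G.neighborFinset u).filter (fun w => ¬ G.dist v w = i + 1)).card
            = G.degree u := by
          rw [← G.card_neighborFinset_eq_degree u]
          exact Finset.card_filter_add_card_filter_not _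
        have hone : ((G.neighborFinset u).filter (fun w => ¬ G.dist v w = i + 1)).card ≤ 1 := by
          rw [Finset.card_le_one]
          intro a ha b hb
          simp only [Finset.mem_filter, SimpleGraph.mem_neighborFinset] at ha hb
          have hda : G.dist v a ≤ G.dist v u := by
            have h1 : G.dist v a ≤ G.dist v u + G.dist u a := hconn.dist_triangle
            have h2 : G.dist u a = 1 := SimpleGraph.dist_eq_one_iff_adj.mpr ha.1
            omega
          have hdb : G.dist v b ≤ G.dist v u := by
            have h1 : G.dist v b ≤ G.dist v u + G.dist u b := hconn.dist_triangle
            have h2 : G.dist u b = 1 := SimpleGraph.dist_eq_one_iff_adj.mpr hb.1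
            omega
          exact tree_unique_down hconn hacyclic v u a b ha.1 hb.1 hda hdb
        omega
      have key2 : ∀ u1 ∈ S i, ∀ u2 ∈ S i, u1 ≠ u2 → Disjoint (T u1) (T u2) := by
        intro u1 h1 u2 h2 hne
        simp only [hS, Finset.mem_filter, Finset.mem_univ, true_and] at h1 h2
        rw [Finset.disjoint_left]
        intro w hw1 hw2
        simp only [hT, Finset.mem_filter, SimpleGraph.mem_neighborFinset] at hw1 hw2
        exact hne (tree_unique_down hconn hacyclic v w u1 u2 hw1.1.symm hw2.1.symm
          (by omega) (by omega))
      have hsub : (S i).biUnion T ⊆ S (i + 1) := by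
        intro w hw
        simp only [Finset.mem_biUnion] at hw
        obtain ⟨u, _, hu⟩ := hw
        simp only [hT, Finset.mem_filter] at hu
        simp [hS, hu.2]
      calc 2 ^ (i + 1) = 2 * 2 ^ i := by ring
        _ ≤ 2 * (S i).card := by omega
        _ = ∑ _u ∈ S i, 2 := by simp [mul_comm]
        _ ≤ ∑ u ∈ S i, (T u).card := Finset.sum_le_sum key1
        _ = ((S i).biUnion T).card := (Finset.card_biUnion key2).symm
        _ ≤ (S (i + 1)).card := Finset.card_le_card hsub
  calc 2 ^ k ≤ (S k).card := hmain k le_rfl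
    _ ≤ Fintype.card V := by
      simpa using Finset.card_filter_le Finset.univ (fun u => G.dist v u = k)

/-- Inequality (12) of the paper: if the vertex set of a finite tree with `n ≥ 2`
vertices, all of whose vertices have degree `1` or at least `3`, is endowed with the
graph distance, then the Gromov–Hausdorff distance between the set of leaves and the
whole vertex set is at most `ln(n)/ln(2)`. -/
theorem stmt_11 {V : Type*} [Fintype V] [DecidableEq V] (G : SimpleGraph V)
    [DecidableRel G.Adj] [MetricSpace V] [Nonempty V]
    [Nonempty {v : V // G.degree v = 1}]
    (hmetric : ∀ v w : V, dist v w = (G.dist v w : ℝ))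
    (n : ℕ) (hcard : Fintype.card V = n) (hn : 2 ≤ n)
    (hconn : G.Connected) (hacyclic : G.IsAcyclic)
    (hdeg : ∀ v : V, G.degree v = 1 ∨ 3 ≤ G.degree v) :
    GromovHausdorff.ghDist {v : V // G.degree v = 1} V ≤ Real.log n / Real.log 2 := by
  classical
  have h2 : (0:ℝ) < Real.log 2 := Real.log_pos (by norm_num)
  have h0 : (0:ℝ) ≤ Real.log n / Real.log 2 := by
    apply div_nonneg _ h2.le
    apply Real.log_nonneg
    exact_mod_cast Nat.one_le_of_lt hn
  have key : ∀ x : V, ∃ ℓ : V, G.degree ℓ = 1 ∧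
      (G.dist x ℓ : ℝ) ≤ Real.log n / Real.log 2 := by
    intro x
    obtain ⟨ℓ, hℓ, hle⟩ := exists_close_leaf G hconn hacyclic hdeg x
    refine ⟨ℓ, hℓ, ?_⟩
    rw [le_div_iff₀ h2, ← Real.log_pow]
    apply Real.log_le_log (by positivity)
    rw [hcard] at hle
    exact_mod_cast hle
  have hgh : GromovHausdorff.ghDist {v : V // G.degree v = 1} V ≤
      Metric.hausdorffDist
        (Set.range (Subtype.val : {v : V // G.degree v = 1} → V))
        (Set.range (id : V → V)) :=
    GromovHausdorff.ghDist_le_hausdorffDist isometry_subtype_coe isometry_id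
  refine hgh.trans (Metric.hausdorffDist_le_of_mem_dist h0 ?_ ?_)
  · rintro x ⟨l, rfl⟩
    exact ⟨l.1, ⟨l.1, rfl⟩, by simp [h0]⟩
  · rintro y ⟨x, rfl⟩
    obtain ⟨ℓ, hℓ, hd⟩ := key (id x)
    refine ⟨ℓ, ⟨⟨ℓ, hℓ⟩, rfl⟩, ?_⟩
    rw [_root_.dist_comm, hmetric, SimpleGraph.dist_comm]
    exact hd
end

section
/- Let B be a nonempty subset of {2,3,4,...}. Then there exists a unique real number r ∈ (0,1) such that Σ_{i∈B} i·r^{i−1} = 1. Moreover, defining ν₀ = 1 − Σ_{i∈B} r^{i−1}, ν_i = r^{i−1} for i ∈ B, and ν_i = 0 for all other i ≥ 1, the sequence ν is a critical probability distribution: ν_i ≥ 0 for all i, Σ_{i≥0} ν_i = 1, and Σ_{i≥0} i·ν_i = 1. -/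
open Classical

lemma aux_sum1 {r : ℝ} (h0 : 0 ≤ r) (h1 : r < 1) :
    Summable (fun i : ℕ => (i : ℝ) * r ^ (i - 1)) := by
  rw [← summable_nat_add_iff 1]
  have h2 : Summable (fun n : ℕ => ((n : ℝ) + 1) * r ^ n) := by
    have ha := summable_pow_mul_geometric_of_norm_lt_one (R := ℝ) 1 (by
      rwa [Real.norm_eq_abs, abs_of_nonneg h0])
    have hb := summable_geometric_of_lt_one h0 h1
    simpa [add_mul, pow_one] using ha.add hb
  convert h2 using 2 with n
  push_cast
  rfl
  simp

lemma aux_sumB (B : Set ℕ) {r : ℝ} (h0 : 0 ≤ r) (h1 : r < 1) :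
    Summable (fun i : ℕ => if i ∈ B then (i : ℝ) * r ^ (i - 1) else 0) := by
  refine Summable.of_nonneg_of_le ?_ ?_ (aux_sum1 h0 h1)
  · intro i; split <;> positivity
  · intro i; split
    · exact le_refl _
    · positivity

lemma aux_sumB' (B : Set ℕ) (hB2 : ∀ i ∈ B, 2 ≤ i) {r : ℝ} (h0 : 0 ≤ r) (h1 : r < 1) :
    Summable (fun i : ℕ => if i ∈ B then r ^ (i - 1) else 0) := by
  refine Summable.of_nonneg_of_le ?_ ?_ (aux_sumB B h0 h1)
  · intro i; split <;> positivity
  · intro i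
    by_cases hi : i ∈ B <;> simp only [hi, if_pos, if_neg, if_true, if_false]
    · have hp : (0:ℝ) ≤ r ^ (i - 1) := pow_nonneg h0 _
      have hi2 : (2:ℝ) ≤ (i : ℝ) := by exact_mod_cast hB2 i hi
      nlinarith [mul_nonneg (by linarith : (0:ℝ) ≤ (i:ℝ) - 1) hp]
    · simp

lemma aux_mono (B : Set ℕ) (hB2 : ∀ i ∈ B, 2 ≤ i) {i₀ : ℕ} (hi₀ : i₀ ∈ B)
    {x y : ℝ} (hx : 0 ≤ x) (hxy : x < y) (hy : y < 1) :
    (∑' i : ℕ, (if i ∈ B then (i : ℝ) * x ^ (i - 1) else 0)) <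
      ∑' i : ℕ, (if i ∈ B then (i : ℝ) * y ^ (i - 1) else 0) := by
  have hy0 : (0:ℝ) ≤ y := le_of_lt (lt_of_le_of_lt hx hxy)
  refine Summable.tsum_lt_tsum (i := i₀) ?_ ?_ (aux_sumB B hx (hxy.trans hy))
    (aux_sumB B hy0 hy)
  · intro i
    by_cases hi : i ∈ B <;> simp only [hi, if_true, if_false]
    · have : x ^ (i-1) ≤ y ^ (i-1) := pow_le_pow_left₀ hx hxy.le _
      have : (0:ℝ) ≤ (i:ℝ) := Nat.cast_nonneg i
      nlinarith [pow_le_pow_left₀ hx hxy.le (i-1)]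
    · exact le_refl _
  · rw [if_pos hi₀, if_pos hi₀]
    have h1 : i₀ - 1 ≠ 0 := by have := hB2 i₀ hi₀; omega
    have hpow : x ^ (i₀-1) < y ^ (i₀-1) := pow_lt_pow_left₀ hxy hx h1
    have hip : (0:ℝ) < (i₀:ℝ) := by have := hB2 i₀ hi₀; positivity
    exact mul_lt_mul_of_pos_left hpow hip

lemma aux_big (B : Set ℕ) (hB2 : ∀ i ∈ B, 2 ≤ i) {i₀ : ℕ} (hi₀ : i₀ ∈ B) :
    ∃ ρ ∈ Set.Ioo (0:ℝ) 1,
      1 < ∑' i : ℕ, (if i ∈ B then (i : ℝ) * ρ ^ (i - 1) else 0) := by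
  have hcont : ContinuousAt (fun x : ℝ => (i₀ : ℝ) * x ^ (i₀ - 1)) 1 := by
    fun_prop
  have h2 : (1:ℝ) < (i₀ : ℝ) * 1 ^ (i₀ - 1) := by
    have := hB2 i₀ hi₀
    have : (2:ℝ) ≤ (i₀:ℝ) := by exact_mod_cast this
    simp; linarith
  have hev : ∀ᶠ x in nhdsWithin 1 (Set.Ioo (0:ℝ) 1),
      1 < (i₀ : ℝ) * x ^ (i₀ - 1) := by
    exact Filter.Eventually.filter_mono nhdsWithin_le_nhds
      (hcont.tendsto.eventually (eventually_gt_nhds h2))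
  have hne : (nhdsWithin (1:ℝ) (Set.Ioo 0 1)).NeBot := by
    exact right_nhdsWithin_Ioo_neBot (by norm_num)
  obtain ⟨ρ, hρ1, hρmem⟩ := (hev.and (eventually_mem_nhdsWithin)).exists
  refine ⟨ρ, hρmem, ?_⟩
  calc (1:ℝ) < (i₀ : ℝ) * ρ ^ (i₀ - 1) := hρ1
    _ = (if i₀ ∈ B then (i₀ : ℝ) * ρ ^ (i₀ - 1) else 0) := by simp [hi₀]
    _ ≤ _ := Summable.le_tsum (aux_sumB B hρmem.1.le hρmem.2) i₀ (by
        intro j _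
        have := hρmem.1.le
        split <;> positivity)

lemma aux_exists (B : Set ℕ) (hBne : B.Nonempty) (hB2 : ∀ i ∈ B, 2 ≤ i) :
    ∃ r ∈ Set.Ioo (0:ℝ) 1,
      (∑' i : ℕ, (if i ∈ B then (i : ℝ) * r ^ (i - 1) else 0)) = 1 := by
  obtain ⟨i₀, hi₀⟩ := hBne
  obtain ⟨ρ, hρ, hρbig⟩ := aux_big B hB2 hi₀
  set f : ℝ → ℝ := fun x => ∑' i : ℕ, (if i ∈ B then (i : ℝ) * x ^ (i - 1) else 0)
    with hf
  have hcont : ContinuousOn f (Set.Icc 0 ρ) := by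
    apply continuousOn_tsum (u := fun i : ℕ => if i ∈ B then (i : ℝ) * ρ ^ (i - 1) else 0)
    · intro i
      by_cases hi : i ∈ B
      · simp only [hi, if_true]; fun_prop
      · simp only [hi, if_false]; fun_prop
    · exact aux_sumB B hρ.1.le hρ.2
    · intro i x hx
      by_cases hi : i ∈ B
      · simp only [hi, if_true]
        have hx0 : (0:ℝ) ≤ x := hx.1
        rw [Real.norm_eq_abs, abs_of_nonneg (by positivity)]
        gcongr
        exact hx.2
      · simp [hi]
  have hf0 : f 0 = 0 := by
    rw [hf]
    convert tsum_zero with i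
    split
    · rename_i hi
      have : i - 1 ≠ 0 := by have := hB2 i hi; omega
      simp [zero_pow this]
    · rfl
  have h1mem : (1:ℝ) ∈ Set.Icc (f 0) (f ρ) := by
    rw [hf0]; exact ⟨by norm_num, hρbig.le⟩
  obtain ⟨r, hr, hfr⟩ := intermediate_value_Icc hρ.1.le hcont h1mem
  refine ⟨r, ⟨?_, lt_of_le_of_lt hr.2 hρ.2⟩, hfr⟩
  rcases eq_or_lt_of_le hr.1 with h | h
  · exfalso; rw [← h] at hfr; rw [hf0] at hfr; norm_num at hfr
  · exact h

open Classical in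
/-- Section 5.2: for every nonempty set `B ⊆ {2,3,4,…}` there is a unique `r ∈ (0,1)`
with `Σ_{i∈B} i·r^{i−1} = 1`, and the associated sequence `ν` (with `ν₀ = 1 − Σ_{i∈B} r^{i−1}`,
`ν_i = r^{i−1}` for `i ∈ B`, `ν_i = 0` otherwise) is a critical probability distribution. -/
theorem stmt_13 (B : Set ℕ) (hBne : B.Nonempty) (hB2 : ∀ i ∈ B, 2 ≤ i) :
    ∃ r ∈ Set.Ioo (0 : ℝ) 1,
      ((∑' i : ℕ, (if i ∈ B then (i : ℝ) * r ^ (i - 1) else 0)) = 1) ∧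
      (∀ r' ∈ Set.Ioo (0 : ℝ) 1,
        (∑' i : ℕ, (if i ∈ B then (i : ℝ) * r' ^ (i - 1) else 0)) = 1 → r' = r) ∧
      (let ν : ℕ → ℝ := fun i =>
          if i ∈ B then r ^ (i - 1)
          else if i = 0 then 1 - ∑' j : ℕ, (if j ∈ B then r ^ (j - 1) else 0)
          else 0;
        (∀ i, 0 ≤ ν i) ∧ (∑' i : ℕ, ν i = 1) ∧ (∑' i : ℕ, (i : ℝ) * ν i = 1)) := by
  obtain ⟨r, hr, hfr⟩ := aux_exists B hBne hB2
  obtain ⟨i₀, hi₀⟩ := hBne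
  have hr0 : (0:ℝ) ≤ r := hr.1.le
  have hr1 : r < 1 := hr.2
  have hsum' := aux_sumB' B hB2 hr0 hr1
  have hsum := aux_sumB B hr0 hr1
  refine ⟨r, hr, hfr, ?_, ?_⟩
  · intro r' hr' h1
    rcases lt_trichotomy r' r with h | h | h
    · exfalso
      have := aux_mono B hB2 hi₀ hr'.1.le h hr.2
      rw [h1, hfr] at this; exact lt_irrefl _ this
    · exact h
    · exfalso
      have := aux_mono B hB2 hi₀ hr.1.le h hr'.2
      rw [h1, hfr] at this; exact lt_irrefl _ this
  · intro ν
    have h0B : (0:ℕ) ∉ B := fun h => by have := hB2 0 h; omega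
    have hSle : (∑' j : ℕ, (if j ∈ B then r ^ (j - 1) else 0)) ≤ 1 := by
      rw [← hfr]
      refine Summable.tsum_le_tsum ?_ hsum' hsum
      intro i
      by_cases hi : i ∈ B
      · simp only [hi, if_true]
        have hp : (0:ℝ) ≤ r ^ (i - 1) := pow_nonneg hr0 _
        have hi2 : (2:ℝ) ≤ (i : ℝ) := by exact_mod_cast hB2 i hi
        nlinarith [mul_nonneg (by linarith : (0:ℝ) ≤ (i:ℝ) - 1) hp]
      · simp [hi]
    refine ⟨?_, ?_, ?_⟩
    · intro i
      simp only [ν]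
      split
      · positivity
      · split
        · linarith
        · exact le_refl _
    · have hνeq : ν = fun i =>
          (if i ∈ B then r ^ (i - 1) else 0) +
          (if i = 0 then 1 - ∑' j : ℕ, (if j ∈ B then r ^ (j - 1) else 0) else 0) := by
        funext i
        simp only [ν]
        by_cases hi : i ∈ B
        · have : i ≠ 0 := fun h => h0B (h ▸ hi)
          simp [hi, this]
        · simp [hi]
      rw [hνeq, Summable.tsum_add hsum' ((hasSum_ite_eq 0 _).summable), tsum_ite_eq]
      ring
    · have heq : ∀ i : ℕ, (i : ℝ) * ν i = if i ∈ B then (i : ℝ) * r ^ (i - 1) else 0 := by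
        intro i
        simp only [ν]
        by_cases hi : i ∈ B
        · simp [hi]
        · simp only [hi, if_false]
          by_cases h0 : i = 0
          · subst h0; simp
          · simp [h0]
      rw [tsum_congr heq]
      exact hfr
end

section
/- Let μ be the probability distribution with μ₀ = 2 − √2, μ₁ = 0, and μ_i = ((2 − √2)/2)^{i−1} for every i ≥ 2. Then μ is a critical probability distribution (Σ_{i≥0} μ_i = 1 and Σ_{i≥0} i·μ_i = 1), and with σ² = Σ_{i≥0} i²·μ_i − 1, μ_{2Z} = Σ_{i≥0} μ_{2i}, c_tree(μ) = 2/(σ·√μ₀) and c_geo(μ) = (1/4)·(σ² + μ₀·μ_{2Z}/(2·μ_{2Z} − μ₀)), one has c_tree(μ)·c_geo(μ) = (1/7)·(3 + √2)·2^{3/4}. -/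
open Finset

/-- Sum of `n^2 r^n` for `|r| < 1`. -/
lemma hasSum_sq_mul_geom {r : ℝ} (hr : |r| < 1) :
    HasSum (fun n : ℕ => (n : ℝ) ^ 2 * r ^ n) (r * (1 + r) / (1 - r) ^ 3) := by
  have hr' : ‖r‖ < 1 := hr
  have hs : Summable (fun n : ℕ => (n : ℝ) ^ 2 * r ^ n) :=
    summable_pow_mul_geometric_of_norm_lt_one 2 hr'
  have h0 : HasSum (fun n : ℕ => r ^ n) (1 - r)⁻¹ := hasSum_geometric_of_norm_lt_one hr'
  have h1 : HasSum (fun n : ℕ => (n : ℝ) * r ^ n) (r / (1 - r) ^ 2) :=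
    hasSum_coe_mul_geometric_of_norm_lt_one hr'
  have hne : (1 : ℝ) - r ≠ 0 := by
    intro h
    rw [sub_eq_zero] at h
    rw [← h] at hr
    simp at hr
  set L := ∑' n : ℕ, (n : ℝ) ^ 2 * r ^ n with hLdef
  have hMain : HasSum (fun n : ℕ => (n : ℝ) ^ 2 * r ^ n) L := hs.hasSum
  have hshift : L = ∑' n : ℕ, ((n : ℝ) + 1) ^ 2 * r ^ (n + 1) := by
    rw [hLdef, Summable.tsum_eq_zero_add hs]
    push_cast
    simp
  have heq : (fun n : ℕ => ((n : ℝ) + 1) ^ 2 * r ^ (n + 1))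
      = fun n : ℕ => (r * ((n : ℝ) ^ 2 * r ^ n) + 2 * r * ((n : ℝ) * r ^ n)) + r * r ^ n := by
    funext n; ring
  have hS2 : HasSum (fun n : ℕ => ((n : ℝ) + 1) ^ 2 * r ^ (n + 1))
      ((r * L + 2 * r * (r / (1 - r) ^ 2)) + r * (1 - r)⁻¹) := by
    rw [heq]
    exact ((hMain.mul_left r).add (h1.mul_left (2 * r))).add (h0.mul_left r)
  have hLeq : L = (r * L + 2 * r * (r / (1 - r) ^ 2)) + r * (1 - r)⁻¹ :=
    hshift.trans hS2.tsum_eq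
  have hLval : L = r * (1 + r) / (1 - r) ^ 3 := by
    have h3 : ((1 : ℝ) - r) ^ 3 ≠ 0 := pow_ne_zero _ hne
    have e1 : L * (1 - r) = 2 * r * (r / (1 - r) ^ 2) + r * (1 - r)⁻¹ := by
      linear_combination hLeq
    rw [eq_div_iff h3]
    have e2 : L * (1 - r) ^ 3 = (2 * r * (r / (1 - r) ^ 2) + r * (1 - r)⁻¹) * (1 - r) ^ 2 := by
      rw [← e1]; ring
    rw [e2]
    field_simp
    ring
  rw [← hLval]
  exact hMain

/-- The case of uniform dissections: the offspring distribution `μ₀ = 2 − √2`, `μ₁ = 0`,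
`μ_i = ((2 − √2)/2)^{i−1}` for `i ≥ 2` is a critical probability distribution, and its
scaling constant is `c_tree(μ)·c_geo(μ) = (1/7)·(3 + √2)·2^{3/4}`. -/
theorem stmt_17 :
    let μ : ℕ → ℝ := fun i =>
      if i = 0 then 2 - Real.sqrt 2
      else if i = 1 then 0
      else ((2 - Real.sqrt 2) / 2) ^ (i - 1)
    let σ2 : ℝ := (∑' i : ℕ, (i : ℝ) ^ 2 * μ i) - 1
    let m2Z : ℝ := ∑' i : ℕ, μ (2 * i)
    let ctree : ℝ := 2 / (Real.sqrt σ2 * Real.sqrt (μ 0))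
    let cgeo : ℝ := (1 / 4) * (σ2 + μ 0 * m2Z / (2 * m2Z - μ 0))
    (∑' i : ℕ, μ i = 1) ∧ (∑' i : ℕ, (i : ℝ) * μ i = 1) ∧
      ctree * cgeo = (1 / 7) * (3 + Real.sqrt 2) * (2 : ℝ) ^ ((3 : ℝ) / 4) := by
  intro μ σ2 m2Z ctree cgeo
  set s : ℝ := Real.sqrt 2 with hsdef
  have hs2 : s ^ 2 = 2 := Real.sq_sqrt (by norm_num)
  have hs_lb : 1 < s := by nlinarith [Real.sqrt_nonneg 2, hs2]
  have hs_ub : s < 3 / 2 := by nlinarith [Real.sqrt_nonneg 2, hs2]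
  set r : ℝ := (2 - s) / 2 with hrdef
  have hr0 : 0 ≤ r := by rw [hrdef]; nlinarith
  have hr1 : r < 1 := by rw [hrdef]; nlinarith
  have hrabs : |r| < 1 := by rw [abs_of_nonneg hr0]; exact hr1
  have hrnorm : ‖r‖ < 1 := hrabs
  have hsne : s ≠ 0 := by positivity
  have h1r : (1 : ℝ) - r = s / 2 := by rw [hrdef]; ring
  have h1rne : (1 : ℝ) - r ≠ 0 := by rw [h1r]; positivity
  have h0 : HasSum (fun n : ℕ => r ^ n) (1 - r)⁻¹ := hasSum_geometric_of_norm_lt_one hrnorm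
  have h1 : HasSum (fun n : ℕ => (n : ℝ) * r ^ n) (r / (1 - r) ^ 2) :=
    hasSum_coe_mul_geometric_of_norm_lt_one hrnorm
  have h2 : HasSum (fun n : ℕ => (n : ℝ) ^ 2 * r ^ n) (r * (1 + r) / (1 - r) ^ 3) :=
    hasSum_sq_mul_geom hrabs
  -- μ at shifted index:
  have hμs : ∀ n : ℕ, μ (n + 2) = r ^ (n + 1) := by
    intro n
    show (if n + 2 = 0 then 2 - s else if n + 2 = 1 then 0 else r ^ (n + 2 - 1)) = r ^ (n + 1)
    rw [if_neg (by omega), if_neg (by omega)]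
    congr 1
  have hμ0 : μ 0 = 2 - s := rfl
  have hμ1 : μ 1 = 0 := rfl
  -- Sum A
  have hA : HasSum μ 1 := by
    have key : HasSum (fun n : ℕ => μ (n + 2)) (s - 1) := by
      have heq : (fun n : ℕ => μ (n + 2)) = fun n : ℕ => r * r ^ n := by
        funext n; rw [hμs n, pow_succ]; ring
      rw [heq]
      have hval : r * (1 - r)⁻¹ = s - 1 := by
        rw [h1r]
        field_simp
        rw [hrdef]
        linear_combination -hs2
      rw [← hval]
      exact h0.mul_left r
    have := (hasSum_nat_add_iff (f := μ) 2).mp key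
    have hsum2 : ∑ i ∈ range 2, μ i = 2 - s := by
      simp [Finset.sum_range_succ, hμ0, hμ1]
    rw [hsum2] at this
    rw [show s - 1 + (2 - s) = 1 by ring] at this
    exact this
  -- Sum B
  have hB : HasSum (fun i : ℕ => (i : ℝ) * μ i) 1 := by
    have key : HasSum (fun n : ℕ => ((n + 2 : ℕ) : ℝ) * μ (n + 2)) 1 := by
      have heq : (fun n : ℕ => ((n + 2 : ℕ) : ℝ) * μ (n + 2))
          = fun n : ℕ => r * ((n : ℝ) * r ^ n) + 2 * r * r ^ n := by
        funext n; rw [hμs n]; push_cast; ring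
      rw [heq]
      have hval : r * (r / (1 - r) ^ 2) + 2 * r * (1 - r)⁻¹ = 1 := by
        rw [h1r]
        field_simp
        rw [hrdef]
        linear_combination (-2)*hs2
      rw [← hval]
      exact (h1.mul_left r).add (h0.mul_left (2 * r))
    have := (hasSum_nat_add_iff (f := fun i : ℕ => (i : ℝ) * μ i) 2).mp key
    have hsum2 : ∑ i ∈ range 2, (i : ℝ) * μ i = 0 := by
      simp [Finset.sum_range_succ, hμ1]
    rw [hsum2] at this
    simpa using this
  -- Sum C
  have hC : HasSum (fun i : ℕ => (i : ℝ) ^ 2 * μ i) (4 * s - 3) := by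
    have key : HasSum (fun n : ℕ => ((n + 2 : ℕ) : ℝ) ^ 2 * μ (n + 2)) (4 * s - 3) := by
      have heq : (fun n : ℕ => ((n + 2 : ℕ) : ℝ) ^ 2 * μ (n + 2))
          = fun n : ℕ => (r * ((n : ℝ) ^ 2 * r ^ n) + 4 * r * ((n : ℝ) * r ^ n))
              + 4 * r * r ^ n := by
        funext n; rw [hμs n]; push_cast; ring
      rw [heq]
      have hval : (r * (r * (1 + r) / (1 - r) ^ 3) + 4 * r * (r / (1 - r) ^ 2))
          + 4 * r * (1 - r)⁻¹ = 4 * s - 3 := by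
        rw [h1r]
        field_simp
        rw [hrdef]
        linear_combination (-4*s^2+2*s-8)*hs2
      rw [← hval]
      exact ((h2.mul_left r).add (h1.mul_left (4 * r))).add (h0.mul_left (4 * r))
    have := (hasSum_nat_add_iff (f := fun i : ℕ => (i : ℝ) ^ 2 * μ i) 2).mp key
    have hsum2 : ∑ i ∈ range 2, (i : ℝ) ^ 2 * μ i = 0 := by
      simp [Finset.sum_range_succ, hμ1]
    rw [hsum2] at this
    simpa using this
  -- Sum D
  have hD : HasSum (fun i : ℕ => μ (2 * i)) ((12 - 4 * s) / 7) := by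
    have hr2abs : ‖r ^ 2‖ < 1 := by
      rw [Real.norm_eq_abs, abs_of_nonneg (sq_nonneg r)]
      nlinarith
    have h0' : HasSum (fun n : ℕ => (r ^ 2) ^ n) (1 - r ^ 2)⁻¹ :=
      hasSum_geometric_of_norm_lt_one hr2abs
    have key : HasSum (fun n : ℕ => μ (2 * (n + 1))) ((12 - 4 * s) / 7 - (2 - s)) := by
      have heq : (fun n : ℕ => μ (2 * (n + 1))) = fun n : ℕ => r * (r ^ 2) ^ n := by
        funext n
        have h2n : 2 * (n + 1) = (2 * n) + 2 := by omega
        rw [h2n, hμs (2 * n)]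
        rw [pow_succ, pow_mul]
        ring
      rw [heq]
      have hval : r * (1 - r ^ 2)⁻¹ = (12 - 4 * s) / 7 - (2 - s) := by
        have hne2 : (1 : ℝ) - r ^ 2 ≠ 0 := by
          intro h
          have : r ^ 2 = 1 := by linarith
          nlinarith
        field_simp
        rw [hrdef]
        linear_combination ((3/4)*s - 7/2)*hs2
      rw [← hval]
      exact h0'.mul_left r
    have := (hasSum_nat_add_iff (f := fun i : ℕ => μ (2 * i)) 1).mp key
    have hsum1 : ∑ i ∈ range 1, μ (2 * i) = 2 - s := by
      simp [hμ0]
    rw [hsum1] at this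
    simpa using this
  refine ⟨hA.tsum_eq, hB.tsum_eq, ?_⟩
  -- now the algebra
  have hσ2 : σ2 = 4 * s - 4 := by
    show (∑' i : ℕ, (i : ℝ) ^ 2 * μ i) - 1 = 4 * s - 4
    rw [hC.tsum_eq]; ring
  have hm : m2Z = (12 - 4 * s) / 7 := hD.tsum_eq
  have hcgeo : cgeo = (4 * s - 2) / 7 := by
    show (1 / 4) * (σ2 + μ 0 * m2Z / (2 * m2Z - μ 0)) = (4 * s - 2) / 7
    rw [hσ2, hm, hμ0]
    have hden : 2 * ((12 - 4 * s) / 7) - (2 - s) = (10 - s) / 7 := by ring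
    rw [hden]
    have h10 : (10 : ℝ) - s ≠ 0 := by nlinarith
    field_simp
    linear_combination 16*hs2
  have hctree : ctree = 2 / (2 * (s - 1) * Real.sqrt s) := by
    show 2 / (Real.sqrt σ2 * Real.sqrt (μ 0)) = 2 / (2 * (s - 1) * Real.sqrt s)
    rw [hσ2, hμ0]
    congr 1
    rw [← Real.sqrt_mul (by nlinarith)]
    have : (4 * s - 4) * (2 - s) = (2 * (s - 1)) ^ 2 * s := by linear_combination (4 - 4*s) * hs2
    rw [this, Real.sqrt_mul (sq_nonneg _), Real.sqrt_sq (by nlinarith)]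
  rw [hcgeo, hctree]
  -- final radical computation
  have hsq : Real.sqrt s = (2 : ℝ) ^ ((1 : ℝ) / 4) := by
    rw [hsdef, Real.sqrt_eq_rpow, Real.sqrt_eq_rpow, ← Real.rpow_mul (by norm_num : (0:ℝ) ≤ 2)]
    norm_num
  have hprod : Real.sqrt s * (2 : ℝ) ^ ((3 : ℝ) / 4) = 2 := by
    rw [hsq, ← Real.rpow_add (by norm_num)]
    norm_num
  have ha0 : 0 < Real.sqrt s := Real.sqrt_pos.mpr (by nlinarith)
  set a : ℝ := Real.sqrt s
  set T : ℝ := (2 : ℝ) ^ ((3 : ℝ) / 4) with hT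
  have haT : a * T = 2 := hprod
  have hane : a ≠ 0 := ne_of_gt ha0
  have hs1 : s - 1 ≠ 0 := by nlinarith
  field_simp
  linear_combination (3-2*s-s^2)*haT - 2*hs2
end

section
/- Let r ∈ (0,1) satisfy Σ_{k≥1} (2k+1)·r^{2k} = 1 (such r exists and is unique, and satisfies r² = (5 − √17)/4). Define the probability distribution ν by ν_{2k+1} = r^{2k} for every k ≥ 1, ν₀ = 1 − Σ_{k≥1} r^{2k}, and ν_i = 0 for all other i. Then ν is a critical probability distribution, and with σ² = Σ_{i≥0} i²·ν_i − 1, ν_{2Z} = Σ_{i≥0} ν_{2i}, c_tree(ν) = 2/(σ·√ν₀) and c_geo(ν) = (1/4)·(σ² + ν₀·ν_{2Z}/(2·ν_{2Z} − ν₀)), one has c_tree(ν)·c_geo(ν) = √(1/2 + 9/(2·√17)). -/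
set_option maxHeartbeats 1000000

section st18helpers
variable {t : ℝ}

lemma st18_T2 (h0 : 0 ≤ t) (h1 : t < 1) :
    ∑' n : ℕ, (n : ℝ)^2 * t^n = t * (1 + t) / (1 - t)^3 := by
  have hnorm : ‖t‖ < 1 := by rw [Real.norm_eq_abs, abs_of_nonneg h0]; exact h1
  have s0 : Summable (fun n : ℕ => t^n) := summable_geometric_of_lt_one h0 h1
  have s1 : Summable (fun n : ℕ => (n:ℝ) * t^n) := by
    simpa using summable_pow_mul_geometric_of_norm_lt_one 1 hnorm
  have s2 : Summable (fun n : ℕ => (n:ℝ)^2 * t^n) := by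
    simpa using summable_pow_mul_geometric_of_norm_lt_one 2 hnorm
  have T0 : ∑' n : ℕ, t^n = (1-t)⁻¹ := tsum_geometric_of_lt_one h0 h1
  have T1 : ∑' n : ℕ, (n:ℝ) * t^n = t / (1-t)^2 := tsum_coe_mul_geometric_of_norm_lt_one hnorm
  have hne : (1:ℝ) - t ≠ 0 := by nlinarith
  have e1 : ∑' n : ℕ, (n:ℝ)^2 * t^n = ∑' n : ℕ, ((n:ℝ)+1)^2 * t^(n+1) := by
    rw [Summable.tsum_eq_zero_add s2]
    norm_num
  have e2 : ∑' n : ℕ, ((n:ℝ)+1)^2 * t^(n+1)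
      = t * ∑' n : ℕ, (n:ℝ)^2 * t^n + 2*t * (∑' n : ℕ, (n:ℝ) * t^n) + t * ∑' n : ℕ, t^n := by
    rw [show (fun n : ℕ => ((n:ℝ)+1)^2 * t^(n+1))
        = fun n : ℕ => (t * ((n:ℝ)^2 * t^n) + 2*t * ((n:ℝ) * t^n)) + t * t^n
        from funext fun n => by ring,
      Summable.tsum_add ((s2.mul_left t).add (s1.mul_left (2*t))) (s0.mul_left t),
      Summable.tsum_add (s2.mul_left t) (s1.mul_left (2*t)), tsum_mul_left, tsum_mul_left, tsum_mul_left]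
  have key := e1.trans e2
  rw [T0, T1] at key
  have key2 : (∑' n : ℕ, (n:ℝ)^2 * t^n) * (1-t)^3 = t*(1+t) := by
    apply mul_right_cancel₀ hne
    field_simp at key
    linear_combination (1 - t) * key
  rw [eq_div_iff (pow_ne_zero 3 hne)]
  linear_combination key2

lemma st18_sum0 (h0 : 0 ≤ t) (h1 : t < 1) :
    ∑' k : ℕ, t^(k+1) = t / (1-t) := by
  have hne : (1:ℝ) - t ≠ 0 := by nlinarith
  have s0 : Summable (fun n : ℕ => t^n) := summable_geometric_of_lt_one h0 h1
  have := Summable.tsum_eq_zero_add s0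
  rw [tsum_geometric_of_lt_one h0 h1] at this
  rw [pow_zero] at this
  have h2 : ∑' (b : ℕ), t ^ (b + 1) = (1-t)⁻¹ - 1 := by linarith
  rw [h2, eq_div_iff hne]
  field_simp
  ring

lemma st18_sum1 (h0 : 0 ≤ t) (h1 : t < 1) :
    ∑' k : ℕ, (2*((k:ℝ)+1)+1) * t^(k+1) = (3*t - t^2) / (1-t)^2 := by
  have hnorm : ‖t‖ < 1 := by rw [Real.norm_eq_abs, abs_of_nonneg h0]; exact h1
  have hne : (1:ℝ) - t ≠ 0 := by nlinarith
  have s0 : Summable (fun n : ℕ => t^n) := summable_geometric_of_lt_one h0 h1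
  have s1 : Summable (fun n : ℕ => (n:ℝ) * t^n) := by
    simpa using summable_pow_mul_geometric_of_norm_lt_one 1 hnorm
  have sg : Summable (fun n : ℕ => (2*(n:ℝ)+1) * t^n) := by
    refine (((s1.mul_left 2).add s0).congr fun n => by ring)
  have hg : ∑' n : ℕ, (2*(n:ℝ)+1) * t^n = 2 * (t/(1-t)^2) + (1-t)⁻¹ := by
    rw [show (fun n : ℕ => (2*(n:ℝ)+1) * t^n) = fun n : ℕ => 2*((n:ℝ)*t^n) + t^n
        from funext fun n => by ring,
      Summable.tsum_add (s1.mul_left 2) s0, tsum_mul_left,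
      tsum_coe_mul_geometric_of_norm_lt_one hnorm, tsum_geometric_of_lt_one h0 h1]
  have e : ∑' k : ℕ, (2*((k:ℝ)+1)+1) * t^(k+1) = ∑' k : ℕ, (2*(((k:ℕ)+1 : ℕ):ℝ)+1) * t^(k+1) :=
    tsum_congr fun k => by push_cast; ring
  rw [e]
  have h3 : ∑' k : ℕ, (2*(((k:ℕ)+1 : ℕ):ℝ)+1) * t^(k+1)
      = 2 * (t/(1-t)^2) + (1-t)⁻¹ - (2*((0:ℕ):ℝ)+1) * t^0 := by
    rw [← hg, Summable.tsum_eq_zero_add sg]; ring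
  rw [h3]
  field_simp
  ring

lemma st18_sum2 (h0 : 0 ≤ t) (h1 : t < 1) :
    ∑' k : ℕ, (2*((k:ℝ)+1)+1)^2 * t^(k+1) = t * (t^2 - 2*t + 9) / (1-t)^3 := by
  have hnorm : ‖t‖ < 1 := by rw [Real.norm_eq_abs, abs_of_nonneg h0]; exact h1
  have hne : (1:ℝ) - t ≠ 0 := by nlinarith
  have s0 : Summable (fun n : ℕ => t^n) := summable_geometric_of_lt_one h0 h1
  have s1 : Summable (fun n : ℕ => (n:ℝ) * t^n) := by
    simpa using summable_pow_mul_geometric_of_norm_lt_one 1 hnorm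
  have s2 : Summable (fun n : ℕ => (n:ℝ)^2 * t^n) := by
    simpa using summable_pow_mul_geometric_of_norm_lt_one 2 hnorm
  have sg : Summable (fun n : ℕ => (2*(n:ℝ)+1)^2 * t^n) := by
    refine ((((s2.mul_left 4).add (s1.mul_left 4)).add s0).congr fun n => by ring)
  have hg : ∑' n : ℕ, (2*(n:ℝ)+1)^2 * t^n
      = 4 * (t*(1+t)/(1-t)^3) + 4 * (t/(1-t)^2) + (1-t)⁻¹ := by
    rw [show (fun n : ℕ => (2*(n:ℝ)+1)^2 * t^n)
        = fun n : ℕ => (4*((n:ℝ)^2*t^n) + 4*((n:ℝ)*t^n)) + t^n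
        from funext fun n => by ring,
      Summable.tsum_add ((s2.mul_left 4).add (s1.mul_left 4)) s0,
      Summable.tsum_add (s2.mul_left 4) (s1.mul_left 4), tsum_mul_left, tsum_mul_left,
      st18_T2 h0 h1, tsum_coe_mul_geometric_of_norm_lt_one hnorm,
      tsum_geometric_of_lt_one h0 h1]
  have e : ∑' k : ℕ, (2*((k:ℝ)+1)+1)^2 * t^(k+1)
      = ∑' k : ℕ, (2*(((k:ℕ)+1 : ℕ):ℝ)+1)^2 * t^(k+1) :=
    tsum_congr fun k => by push_cast; ring
  rw [e]
  have h3 : ∑' k : ℕ, (2*(((k:ℕ)+1 : ℕ):ℝ)+1)^2 * t^(k+1)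
      = (4 * (t*(1+t)/(1-t)^3) + 4 * (t/(1-t)^2) + (1-t)⁻¹) - (2*((0:ℕ):ℝ)+1)^2 * t^0 := by
    rw [← hg, Summable.tsum_eq_zero_add sg]; ring
  rw [h3]
  field_simp
  ring

lemma st18_shift (g : ℕ → ℝ) (hg : Summable g) :
    ∑' k : ℕ, (if k = 0 then (0:ℝ) else g k) = ∑' k : ℕ, g (k+1) := by
  have aux : Summable (fun k : ℕ => if k = 0 then g 0 else 0) :=
    summable_of_ne_finset_zero (s := {0}) (fun b hb => by simp at hb; simp [hb])
  have hsum : Summable (fun k : ℕ => if k = 0 then (0:ℝ) else g k) :=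
    (hg.sub aux).congr fun k => by by_cases h : k = 0 <;> simp [h]
  rw [Summable.tsum_eq_zero_add hsum]
  simp

end st18helpers

open Classical in
/-- Dissections with all face degrees even (Section 5.2): there is a unique `r ∈ (0,1)`
with `Σ_{k≥1} (2k+1)·r^{2k} = 1`; it satisfies `r² = (5 − √17)/4`, the associated
offspring distribution `ν` (with `ν_{2k+1} = r^{2k}` for `k ≥ 1` and
`ν₀ = 1 − Σ_{k≥1} r^{2k}`) is a critical probability distribution, and its scaling
constant is `c_tree(ν)·c_geo(ν) = √(1/2 + 9/(2√17))`. -/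
theorem stmt_18 :
    (∃ r ∈ Set.Ioo (0 : ℝ) 1,
      ∑' k : ℕ, (2 * ((k : ℝ) + 1) + 1) * r ^ (2 * (k + 1)) = 1) ∧
    (∀ r ∈ Set.Ioo (0 : ℝ) 1,
      (∑' k : ℕ, (2 * ((k : ℝ) + 1) + 1) * r ^ (2 * (k + 1)) = 1) →
      (r ^ 2 = (5 - Real.sqrt 17) / 4 ∧
        (let ν : ℕ → ℝ := fun i =>
            if i = 0 then 1 - ∑' k : ℕ, r ^ (2 * (k + 1))
            else if Odd i ∧ i ≠ 1 then r ^ (i - 1)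
            else 0;
          (∀ i, 0 ≤ ν i) ∧ (∑' i : ℕ, ν i = 1) ∧ (∑' i : ℕ, (i : ℝ) * ν i = 1) ∧
            (let σ2 : ℝ := (∑' i : ℕ, (i : ℝ) ^ 2 * ν i) - 1
             let n2Z : ℝ := ∑' i : ℕ, ν (2 * i)
             let ctree : ℝ := 2 / (Real.sqrt σ2 * Real.sqrt (ν 0))
             let cgeo : ℝ := (1 / 4) * (σ2 + ν 0 * n2Z / (2 * n2Z - ν 0))
             ctree * cgeo = Real.sqrt (1 / 2 + 9 / (2 * Real.sqrt 17)))))) := by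
  have hs : Real.sqrt 17 ^ 2 = 17 := Real.sq_sqrt (by norm_num)
  have hsnn : 0 ≤ Real.sqrt 17 := Real.sqrt_nonneg 17
  have hs4 : (4:ℝ) < Real.sqrt 17 := by nlinarith
  have hs5 : Real.sqrt 17 < 5 := by nlinarith
  set s : ℝ := Real.sqrt 17 with hsdef
  constructor
  · -- existence
    have ht0 : (0:ℝ) < (5 - s)/4 := by linarith
    have ht1 : (5 - s)/4 < 1 := by linarith
    refine ⟨Real.sqrt ((5 - s)/4), ⟨Real.sqrt_pos.mpr ht0, ?_⟩, ?_⟩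
    · calc Real.sqrt ((5-s)/4) < Real.sqrt 1 := Real.sqrt_lt_sqrt ht0.le ht1
        _ = 1 := Real.sqrt_one
    · have hr2 : Real.sqrt ((5-s)/4) ^ 2 = (5-s)/4 := Real.sq_sqrt ht0.le
      have : ∑' k : ℕ, (2 * ((k : ℝ) + 1) + 1) * Real.sqrt ((5-s)/4) ^ (2 * (k + 1))
          = ∑' k : ℕ, (2 * ((k : ℝ) + 1) + 1) * ((5-s)/4) ^ (k + 1) :=
        tsum_congr fun k => by rw [pow_mul, hr2]
      rw [this, st18_sum1 ht0.le ht1,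
        div_eq_one_iff_eq (pow_ne_zero 2 (by nlinarith : (0:ℝ) < 1 - (5-s)/4).ne')]
      linear_combination (-1/8) * hs
  · rintro r ⟨hr0, hr1⟩ hsum
    have h0t : 0 < r^2 := by positivity
    have h1t : r^2 < 1 := by nlinarith
    have hsum' : ∑' k : ℕ, (2 * ((k : ℝ) + 1) + 1) * (r^2) ^ (k + 1) = 1 :=
      (tsum_congr fun k => by rw [pow_mul]).trans hsum
    rw [st18_sum1 h0t.le h1t] at hsum'
    have hne : (1:ℝ) - r^2 ≠ 0 := by nlinarith
    have hq : 2*(r^2)^2 - 5*(r^2) + 1 = 0 := by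
      rw [div_eq_one_iff_eq (pow_ne_zero 2 hne)] at hsum'
      linear_combination -hsum'
    have ht : r^2 = (5 - s)/4 := by
      have hfac : (r^2 - (5-s)/4) * (r^2 - (5+s)/4) = 0 := by
        linear_combination (1/2) * hq - (1/16) * hs
      rcases mul_eq_zero.mp hfac with h | h
      · linarith
      · exfalso; nlinarith
    refine ⟨ht, ?_⟩
    intro ν
    have hν : ν = fun i : ℕ =>
        if i = 0 then 1 - ∑' k : ℕ, r ^ (2 * (k + 1))
        else if Odd i ∧ i ≠ 1 then r ^ (i - 1)
        else 0 := rfl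
    -- basic facts about t := r^2
    have ht14 : r^2 < 1/4 := by rw [ht]; linarith
    -- value of the geometric tail
    have hNT : ∑' k : ℕ, r ^ (2 * (k + 1)) = r^2 / (1 - r^2) := by
      rw [show (fun k : ℕ => r ^ (2*(k+1))) = fun k : ℕ => (r^2)^(k+1)
          from funext fun k => by rw [pow_mul]]
      exact st18_sum0 h0t.le h1t
    have hν0 : ν 0 = 1 - r^2/(1 - r^2) := by rw [hν]; simp [hNT]
    have hν0pos : 0 < ν 0 := by
      rw [hν0]
      have : r^2/(1-r^2) < 1 := by rw [div_lt_one (by nlinarith)]; nlinarith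
      linarith
    -- even-index values
    have heven : ∀ i : ℕ, ν (2*i) = if i = 0 then ν 0 else 0 := by
      intro i
      by_cases h : i = 0
      · simp [h]
      · have h2 : ¬ Odd (2*i) := by simp [Nat.not_odd_iff_even.mpr (even_two_mul i)]
        rw [hν]
        simp [h, h2]
    have hn2Z : ∑' i : ℕ, ν (2*i) = ν 0 :=
      (tsum_congr heven).trans (tsum_ite_eq 0 (fun _ => ν 0))
    -- odd-index values
    have hodd : ∀ k : ℕ, k ≠ 0 → ν (2*k+1) = (r^2)^k := by
      intro k hk
      rw [hν]
      have h1 : (2*k+1 : ℕ) ≠ 0 := by omega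
      have h2 : Odd (2*k+1) := ⟨k, by omega⟩
      have h3 : (2*k+1 : ℕ) ≠ 1 := by omega
      dsimp only
      rw [if_neg h1, if_pos ⟨h2, h3⟩, show 2*k+1-1 = 2*k from by omega, pow_mul]
    have hodd1 : ν 1 = 0 := by rw [hν]; simp
    -- summability basis
    have hnorm : ‖r^2‖ < 1 := by rw [Real.norm_eq_abs, abs_of_nonneg h0t.le]; exact h1t
    have s0 : Summable (fun n : ℕ => (r^2)^n) := summable_geometric_of_lt_one h0t.le h1t
    have s1 : Summable (fun n : ℕ => (n:ℝ) * (r^2)^n) := by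
      simpa using summable_pow_mul_geometric_of_norm_lt_one 1 hnorm
    have s2 : Summable (fun n : ℕ => (n:ℝ)^2 * (r^2)^n) := by
      simpa using summable_pow_mul_geometric_of_norm_lt_one 2 hnorm
    have sEvenNu : Summable (fun i : ℕ => ν (2*i)) :=
      summable_of_ne_finset_zero (s := {0}) (fun b hb => by
        simp only [Finset.mem_singleton] at hb
        rw [heven b, if_neg hb])
    -- total mass
    have hmass : ∑' i : ℕ, ν i = 1 := by
      have hoddf : (fun k : ℕ => ν (2*k+1)) = fun k : ℕ => if k = 0 then 0 else (r^2)^k := by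
        funext k
        by_cases h : k = 0
        · simp [h, hodd1]
        · rw [hodd k h, if_neg h]
      have hOsum : ∑' k : ℕ, ν (2*k+1) = r^2/(1-r^2) := by
        rw [hoddf, st18_shift _ s0]
        exact st18_sum0 h0t.le h1t
      have sOdd : Summable (fun k : ℕ => ν (2*k+1)) := by
        rw [hoddf]
        have aux : Summable (fun k : ℕ => if k = 0 then ((r^2)^0 : ℝ) else 0) :=
          summable_of_ne_finset_zero (s := {0}) (fun b hb => by simp at hb; simp [hb])
        exact (s0.sub aux).congr fun k => by by_cases h : k = 0 <;> simp [h]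
      rw [← tsum_even_add_odd sEvenNu sOdd, hn2Z, hOsum, hν0]
      ring
    -- mean
    have hmean : ∑' i : ℕ, (i:ℝ) * ν i = 1 := by
      have sEven : Summable (fun i : ℕ => ((2*i : ℕ):ℝ) * ν (2*i)) := by
        refine summable_of_ne_finset_zero (s := {0}) (fun b hb => ?_)
        simp only [Finset.mem_singleton] at hb
        rw [heven b, if_neg hb, mul_zero]
      have hEsum : ∑' i : ℕ, ((2*i : ℕ):ℝ) * ν (2*i) = 0 := by
        have : (fun i : ℕ => ((2*i : ℕ):ℝ) * ν (2*i)) = fun _ => (0:ℝ) := by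
          funext i
          by_cases h : i = 0
          · simp [h]
          · rw [heven i, if_neg h, mul_zero]
        rw [this, tsum_zero]
      have sg : Summable (fun n : ℕ => (2*(n:ℝ)+1) * (r^2)^n) :=
        ((s1.mul_left 2).add s0).congr fun n => by ring
      have hoddf : (fun k : ℕ => ((2*k+1 : ℕ):ℝ) * ν (2*k+1))
          = fun k : ℕ => if k = 0 then 0 else (2*(k:ℝ)+1) * (r^2)^k := by
        funext k
        by_cases h : k = 0
        · simp [h, hodd1]
        · rw [hodd k h, if_neg h]; push_cast; ring
      have sOdd : Summable (fun k : ℕ => ((2*k+1 : ℕ):ℝ) * ν (2*k+1)) := by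
        rw [hoddf]
        have aux : Summable (fun k : ℕ => if k = 0 then ((2*(0:ℝ)+1) * (r^2)^0 : ℝ) else 0) :=
          summable_of_ne_finset_zero (s := {0}) (fun b hb => by simp at hb; simp [hb])
        exact (sg.sub aux).congr fun k => by by_cases h : k = 0 <;> simp [h]
      have hOsum : ∑' k : ℕ, ((2*k+1 : ℕ):ℝ) * ν (2*k+1) = 1 := by
        rw [hoddf, st18_shift _ sg]
        exact (tsum_congr fun k => by push_cast; ring).trans
          ((st18_sum1 h0t.le h1t).trans hsum')
      calc ∑' i : ℕ, (i:ℝ) * ν i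
          = ∑' i : ℕ, ((2*i : ℕ):ℝ) * ν (2*i) + ∑' k : ℕ, ((2*k+1 : ℕ):ℝ) * ν (2*k+1) :=
            (tsum_even_add_odd (f := fun i : ℕ => (i:ℝ) * ν i) sEven sOdd).symm
        _ = 1 := by rw [hEsum, hOsum]; ring
    -- second moment
    have hM2 : ∑' i : ℕ, (i:ℝ)^2 * ν i
        = r^2 * ((r^2)^2 - 2*(r^2) + 9) / (1 - r^2)^3 := by
      have sEven : Summable (fun i : ℕ => ((2*i : ℕ):ℝ)^2 * ν (2*i)) := by
        refine summable_of_ne_finset_zero (s := {0}) (fun b hb => ?_)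
        simp only [Finset.mem_singleton] at hb
        rw [heven b, if_neg hb, mul_zero]
      have hEsum : ∑' i : ℕ, ((2*i : ℕ):ℝ)^2 * ν (2*i) = 0 := by
        have : (fun i : ℕ => ((2*i : ℕ):ℝ)^2 * ν (2*i)) = fun _ => (0:ℝ) := by
          funext i
          by_cases h : i = 0
          · simp [h]
          · rw [heven i, if_neg h, mul_zero]
        rw [this, tsum_zero]
      have sg : Summable (fun n : ℕ => (2*(n:ℝ)+1)^2 * (r^2)^n) :=
        (((s2.mul_left 4).add (s1.mul_left 4)).add s0).congr fun n => by ring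
      have hoddf : (fun k : ℕ => ((2*k+1 : ℕ):ℝ)^2 * ν (2*k+1))
          = fun k : ℕ => if k = 0 then 0 else (2*(k:ℝ)+1)^2 * (r^2)^k := by
        funext k
        by_cases h : k = 0
        · simp [h, hodd1]
        · rw [hodd k h, if_neg h]; push_cast; ring
      have sOdd : Summable (fun k : ℕ => ((2*k+1 : ℕ):ℝ)^2 * ν (2*k+1)) := by
        rw [hoddf]
        have aux : Summable (fun k : ℕ => if k = 0 then ((2*(0:ℝ)+1)^2 * (r^2)^0 : ℝ) else 0) :=
          summable_of_ne_finset_zero (s := {0}) (fun b hb => by simp at hb; simp [hb])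
        exact (sg.sub aux).congr fun k => by by_cases h : k = 0 <;> simp [h]
      have hOsum : ∑' k : ℕ, ((2*k+1 : ℕ):ℝ)^2 * ν (2*k+1)
          = r^2 * ((r^2)^2 - 2*(r^2) + 9) / (1 - r^2)^3 := by
        rw [hoddf, st18_shift _ sg]
        exact (tsum_congr fun k => by push_cast; ring).trans (st18_sum2 h0t.le h1t)
      calc ∑' i : ℕ, (i:ℝ)^2 * ν i
          = ∑' i : ℕ, ((2*i : ℕ):ℝ)^2 * ν (2*i) + ∑' k : ℕ, ((2*k+1 : ℕ):ℝ)^2 * ν (2*k+1) :=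
            (tsum_even_add_odd (f := fun i : ℕ => (i:ℝ)^2 * ν i) sEven sOdd).symm
        _ = r^2 * ((r^2)^2 - 2*(r^2) + 9) / (1 - r^2)^3 := by rw [hEsum, hOsum]; ring
    -- nonnegativity
    refine ⟨?_, hmass, hmean, ?_⟩
    · intro i
      rw [hν]
      dsimp only
      split_ifs
      · rw [hNT]
        have h4 : r^2/(1-r^2) < 1 := by rw [div_lt_one (by nlinarith)]; nlinarith
        linarith
      · positivity
      · exact le_refl 0
    · intro σ2 n2Z ctree cgeo
      have hσ2 : σ2 = (∑' i : ℕ, (i:ℝ)^2 * ν i) - 1 := rfl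
      have hn2 : n2Z = ∑' i : ℕ, ν (2*i) := rfl
      have hct : ctree = 2 / (Real.sqrt σ2 * Real.sqrt (ν 0)) := rfl
      have hcg : cgeo = (1/4) * (σ2 + ν 0 * n2Z / (2*n2Z - ν 0)) := rfl
      clear_value σ2 n2Z ctree cgeo
      have hσ2v : σ2 = (9 - 14*(r^2))/2 := by
        have e : r^2 * ((r^2)^2 - 2*(r^2) + 9) / (1 - r^2)^3 = (9 - 14*(r^2))/2 + 1 := by
          rw [div_eq_iff (pow_ne_zero 3 hne)]
          linear_combination ((-7*(r^2)^2 + 10*(r^2) - 11)/2) * hq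
        rw [hσ2, hM2, e]; ring
      have hν0v : ν 0 = (1 + 2*(r^2))/2 := by
        rw [hν0]
        field_simp
        linear_combination hq
      have hσ2pos : 0 < σ2 := by rw [hσ2v]; linarith
      have hn2v : n2Z = ν 0 := hn2.trans hn2Z
      have hsu : s = 5 - 4*(r^2) := by rw [ht]; ring
      have hA : σ2 + ν 0 = 5 - 6*(r^2) := by rw [hσ2v, hν0v]; ring
      have hB : 4*(σ2 * ν 0) = 23 - 66*(r^2) := by
        rw [hσ2v, hν0v]; linear_combination (-14) * hq
      have hApos : (0:ℝ) < σ2 + ν 0 := by rw [hA]; linarith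
      have hprodpos : (0:ℝ) < σ2 * ν 0 := mul_pos hσ2pos hν0pos
      have hsq : Real.sqrt (σ2 * ν 0)^2 = σ2 * ν 0 := Real.sq_sqrt hprodpos.le
      have hsqpos : 0 < Real.sqrt (σ2 * ν 0) := Real.sqrt_pos.mpr hprodpos
      have hBpos : (0:ℝ) < 23 - 66*(r^2) := by linarith
      have keyEq : 1/2 + 9/(2*s) = (2 / Real.sqrt (σ2 * ν 0) * ((1/4) * (σ2 + ν 0)))^2 := by
        have e1 : (2 / Real.sqrt (σ2 * ν 0) * ((1/4) * (σ2 + ν 0)))^2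
            = (σ2 + ν 0)^2 / (4*(σ2 * ν 0)) := by
          rw [mul_pow, div_pow, hsq]; ring
        rw [e1, hB, hA, hsu]
        have d1 : (0:ℝ) < 5 - 4*(r^2) := by linarith
        have d2 : (0:ℝ) < 23 - 66*(r^2) := hBpos
        rw [div_add_div _ _ two_ne_zero (mul_ne_zero two_ne_zero d1.ne'),
          div_eq_div_iff (mul_ne_zero two_ne_zero (mul_ne_zero two_ne_zero d1.ne')) d2.ne']
        linear_combination (288*(r^2)+144) * hq
      have main : Real.sqrt (1/2 + 9/(2*s)) = 2 / Real.sqrt (σ2 * ν 0) * ((1/4) * (σ2 + ν 0)) := by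
        rw [keyEq]
        exact Real.sqrt_sq (by positivity)
      rw [hct, hcg, hn2v, show 2 * ν 0 - ν 0 = ν 0 from by ring,
        mul_div_assoc, div_self hν0pos.ne', mul_one, ← Real.sqrt_mul hσ2pos.le (ν 0)]
      exact main.symm
end
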